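/- arXiv:2204.05175 — 4 statements merged into one kernel-verified Lean document; each statement's English description precedes it below -/
import Mathlib

section
/- Under Assumption 1, the set B = {β ∈ ℝ^p : Y₀ ⪰cx X₀'β} contains the origin 0_p, is convex, is compact, and is contained in the ellipsoid B^V = {β ∈ ℝ^p : β' Var(X) β ≤ Var(Y)}. -/
open MeasureTheory ProbabilityTheory Filter Set

lemma convexOn_exists_affine_le {φ : ℝ → ℝ} (hφ : ConvexOn ℝ Set.univ φ) :
    ∃ m : ℝ, ∀ x : ℝ, φ 0 + m * x ≤ φ x := by
  have slope_le : ∀ x < (0:ℝ), ∀ y, 0 < y → (φ 0 - φ x) / (0 - x) ≤ (φ y - φ 0) / (y - 0) := by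
    intro x hx y hy
    have := hφ.slope_mono_adjacent (mem_univ x) (mem_univ y) hx hy
    simpa [slope_def_field] using this
  set S : Set ℝ := (fun x => (φ 0 - φ x) / (0 - x)) '' Iio 0 with hS
  have hne : S.Nonempty := ⟨_, ⟨-1, by norm_num, rfl⟩⟩
  have hbdd : BddAbove S := by
    refine ⟨(φ 1 - φ 0) / (1 - 0), ?_⟩
    rintro r ⟨x, hx, rfl⟩
    exact slope_le x hx 1 one_pos
  refine ⟨sSup S, fun x => ?_⟩
  rcases lt_trichotomy x 0 with h | h | h
  · have hx : (φ 0 - φ x) / (0 - x) ≤ sSup S := le_csSup hbdd ⟨x, h, rfl⟩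
    have h0x : (0:ℝ) < 0 - x := by linarith
    rw [div_le_iff₀ h0x] at hx
    nlinarith
  · simp [h]
  · have hx : sSup S ≤ (φ x - φ 0) / (x - 0) := by
      refine csSup_le hne ?_
      rintro r ⟨z, hz, rfl⟩
      exact slope_le z hz x h
    rw [le_div_iff₀ (by linarith)] at hx
    nlinarith

lemma l2mul {Ω : Type*} [MeasurableSpace Ω] {μ : Measure Ω} {f g : Ω → ℝ}
    (hf : MemLp f 2 μ) (hg : MemLp g 2 μ) :
    Integrable (fun ω => f ω * g ω) μ := by
  have h : MemLp (g • f) 1 μ := hf.smul hg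
  rw [memLp_one_iff_integrable] at h
  exact h.congr (Eventually.of_forall fun ω => by simp [mul_comm])

noncomputable section

variable {Ω : Type*} [MeasurableSpace Ω]

/-- The centered version `A₀ = A - E[A]` of a real random variable. -/
def cent (μ : Measure Ω) (f : Ω → ℝ) : Ω → ℝ := fun ω => f ω - ∫ ω', f ω' ∂μ

/-- The centered version `X₀ = X - E[X]` of an `ℝ^p`-valued random vector. -/
def centV {p : ℕ} (μ : Measure Ω) (X : Ω → EuclideanSpace ℝ (Fin p)) :
    Ω → EuclideanSpace ℝ (Fin p) := fun ω => X ω - ∫ ω', X ω' ∂μ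

/-- Euclidean inner product `x'y`. -/
def dotp {p : ℕ} (x y : EuclideanSpace ℝ (Fin p)) : ℝ := ∑ i, x i * y i

/-- `A` dominates `B` in the convex order: for every convex `φ : ℝ → ℝ`,
`E[φ(B)] ≤ E[φ(A)]`, where both expectations are well defined in `(-∞, +∞]`
(any convex `φ` is bounded below by an affine function, so for a random variable
with finite mean the expectation is `+∞` exactly when `φ ∘ ·` is not integrable). -/
def ConvexOrdGE (μ : Measure Ω) (A B : Ω → ℝ) : Prop :=
  ∀ φ : ℝ → ℝ, ConvexOn ℝ Set.univ φ →
    Integrable (fun ω => φ (A ω)) μ →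
      Integrable (fun ω => φ (B ω)) μ ∧ ∫ ω, φ (B ω) ∂μ ≤ ∫ ω, φ (A ω) ∂μ

/-- The cumulative distribution function of a real random variable. -/
def cdfRV (μ : Measure Ω) (A : Ω → ℝ) : ℝ → ℝ := fun t => (μ {ω | A ω ≤ t}).toReal

/-- Generalized inverse (quantile function) `F⁻¹(t) = inf {x : t ≤ F x}` of a cdf. -/
def qf (F : ℝ → ℝ) : ℝ → ℝ := fun t => sInf {x | t ≤ F x}

/-- The ratio of integrated quantiles `R(α, F, G)`. -/
def Rratio (α : ℝ) (F G : ℝ → ℝ) : ℝ := (∫ t in α..1, qf F t) / (∫ t in α..1, qf G t)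

/-- `S(F, G) = inf_{α ∈ (0,1)} R(α, F, G)`. -/
def Sinf (F G : ℝ → ℝ) : ℝ := sInf {r | ∃ α ∈ Set.Ioo (0:ℝ) 1, r = Rratio α F G}

/-- `S_ε(F, G) = min_{α ∈ [ε, 1-ε]} R(α, F, G)`. -/
def Seps (ε : ℝ) (F G : ℝ → ℝ) : ℝ := sInf {r | ∃ α ∈ Set.Icc ε (1 - ε), r = Rratio α F G}

/-- The covariance matrix `Var(X)` of an `ℝ^p`-valued random vector. -/
def covMatrix {p : ℕ} (μ : Measure Ω) (X : Ω → EuclideanSpace ℝ (Fin p)) :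
    Matrix (Fin p) (Fin p) ℝ :=
  Matrix.of fun i j =>
    ∫ ω, (X ω i - ∫ ω', X ω' i ∂μ) * (X ω j - ∫ ω', X ω' j ∂μ) ∂μ

/-- The identified set `B = {β ∈ ℝ^p : Y₀ ⪰cx X₀'β}`. -/
def Bset {p : ℕ} (μ : Measure Ω) (Y : Ω → ℝ) (X : Ω → EuclideanSpace ℝ (Fin p)) :
    Set (EuclideanSpace ℝ (Fin p)) :=
  {β | ConvexOrdGE μ (cent μ Y) (fun ω => dotp (centV μ X ω) β)}

/-- The regularized outer set `B_ε = {λ q : q ∈ S_p, 0 ≤ λ ≤ S_ε(F_{Y₀}, F_{X₀'q})}`. -/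
def BepsSet {p : ℕ} (μ : Measure Ω) (Y : Ω → ℝ) (X : Ω → EuclideanSpace ℝ (Fin p)) (ε : ℝ) :
    Set (EuclideanSpace ℝ (Fin p)) :=
  {x | ∃ (q : EuclideanSpace ℝ (Fin p)) (l : ℝ), ‖q‖ = 1 ∧ 0 ≤ l ∧
    l ≤ Seps ε (cdfRV μ (cent μ Y)) (cdfRV μ (fun ω => dotp (centV μ X ω) q)) ∧ x = l • q}

/-- Under Assumption 1, the identified set `B` contains the origin,
is convex, compact, and is contained in the ellipsoid `{β : β' Var(X) β ≤ Var(Y)}`. -/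
theorem stmt2 (μ : Measure Ω) [IsProbabilityMeasure μ] {p : ℕ}
    (Y : Ω → ℝ) (X : Ω → EuclideanSpace ℝ (Fin p))
    (hYm : Measurable Y) (hXm : Measurable X)
    (hY2 : MemLp Y 2 μ) (hX2 : MemLp X 2 μ)
    (hVarY : 0 < variance Y μ) (hVarX : (covMatrix μ X).det ≠ 0)
    (α₀ : ℝ) (β₀ : EuclideanSpace ℝ (Fin p))
    (hmod : μ[Y | MeasurableSpace.comap X inferInstance]
      =ᵐ[μ] fun ω => α₀ + dotp (X ω) β₀) :
    0 ∈ Bset μ Y X ∧ Convex ℝ (Bset μ Y X) ∧ IsCompact (Bset μ Y X) ∧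
      Bset μ Y X ⊆ {β | ∑ i, ∑ j, β i * covMatrix μ X i j * β j ≤ variance Y μ} := by
  have hXint : Integrable X μ := hX2.integrable one_le_two
  have hXi2 : ∀ i, MemLp (fun ω => X ω i) 2 μ := fun i =>
    (EuclideanSpace.proj i : EuclideanSpace ℝ (Fin p) →L[ℝ] ℝ).comp_memLp' hX2
  have hci : ∀ i, (∫ ω, X ω ∂μ) i = ∫ ω, X ω i ∂μ := fun i =>
    ((EuclideanSpace.proj i : EuclideanSpace ℝ (Fin p) →L[ℝ] ℝ).integral_comp_comm hXint).symm
  set Xc : Fin p → Ω → ℝ := fun i ω => X ω i - ∫ ω', X ω' i ∂μ with hXcdef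
  have hXc2 : ∀ i, MemLp (Xc i) 2 μ := fun i => (hXi2 i).sub (memLp_const _)
  have hXcint : ∀ i, Integrable (Xc i) μ := fun i => (hXc2 i).integrable one_le_two
  have hXcmeas : ∀ i, Measurable (Xc i) := fun i =>
    ((EuclideanSpace.proj i : EuclideanSpace ℝ (Fin p) →L[ℝ] ℝ).continuous.measurable.comp hXm).sub
      measurable_const
  have hXcmean : ∀ i, ∫ ω, Xc i ω ∂μ = 0 := by
    intro i
    simp [hXcdef, integral_sub ((hXi2 i).integrable one_le_two) (integrable_const _),
      integral_const, measure_univ]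
  set w : EuclideanSpace ℝ (Fin p) → Ω → ℝ := fun β ω => ∑ i, Xc i ω * β i with hwdef'
  have hwdef : ∀ β ω, dotp (centV μ X ω) β = w β ω := by
    intro β ω
    refine Finset.sum_congr rfl fun i _ => ?_
    congr 1
    show X ω i - (∫ ω', X ω' ∂μ) i = Xc i ω
    rw [hci i]
  have hw2 : ∀ β, MemLp (w β) 2 μ := by
    intro β
    refine memLp_finset_sum _ (f := fun i ω => Xc i ω * β i) fun i _ => ?_
    have h1 : MemLp ((β i) • Xc i) 2 μ := (hXc2 i).const_smul (β i)
    exact h1.ae_eq (Eventually.of_forall fun ω => by simp [mul_comm])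
  have hwint : ∀ β, Integrable (w β) μ := fun β => (hw2 β).integrable one_le_two
  have hwm : ∀ β, Measurable (w β) := fun β =>
    Finset.measurable_sum _ fun i _ => (hXcmeas i).mul_const _
  have hwmean : ∀ β, ∫ ω, w β ω ∂μ = 0 := by
    intro β
    rw [show w β = fun ω => ∑ i, Xc i ω * β i from rfl]
    rw [integral_finset_sum _ fun i _ => (hXcint i).mul_const _]
    refine Finset.sum_eq_zero fun i _ => ?_
    rw [integral_mul_const, hXcmean i, zero_mul]
  have hwlin : ∀ (a b : ℝ) (β₁ β₂ : EuclideanSpace ℝ (Fin p)) (ω : Ω),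
      w (a • β₁ + b • β₂) ω = a * w β₁ ω + b * w β₂ ω := by
    intro a b β₁ β₂ ω
    simp only [hwdef', Finset.mul_sum, ← Finset.sum_add_distrib]
    refine Finset.sum_congr rfl fun i _ => ?_
    have : (a • β₁ + b • β₂) i = a * β₁ i + b * β₂ i := rfl
    rw [this]; ring
  -- facts about Yc
  have hYc2 : MemLp (cent μ Y) 2 μ := hY2.sub (memLp_const _)
  have hYcint : Integrable (cent μ Y) μ := hYc2.integrable one_le_two
  have hYcmean : ∫ ω, cent μ Y ω ∂μ = 0 := by
    simp [cent, integral_sub (hY2.integrable one_le_two) (integrable_const _),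
      integral_const, measure_univ]
  -- Jensen
  have hJensen : ∀ φ : ℝ → ℝ, ConvexOn ℝ Set.univ φ →
      Integrable (fun ω => φ (cent μ Y ω)) μ → φ 0 ≤ ∫ ω, φ (cent μ Y ω) ∂μ := by
    intro φ hφ hint
    have hcont : Continuous φ := by
      have h := hφ.continuousOn_interior
      rw [interior_univ] at h
      exact continuousOn_univ.mp h
    have h := hφ.map_integral_le hcont.continuousOn isClosed_univ
      (Eventually.of_forall fun _ => mem_univ _) hYcint hint
    rwa [hYcmean] at h
  have hφcont : ∀ φ : ℝ → ℝ, ConvexOn ℝ Set.univ φ → Continuous φ := by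
    intro φ hφ
    have h := hφ.continuousOn_interior
    rw [interior_univ] at h
    exact continuousOn_univ.mp h
  -- 0 ∈ B
  have h0mem : 0 ∈ Bset μ Y X := by
    intro φ hφ hint
    have hz : (fun ω => φ (dotp (centV μ X ω) 0)) = fun _ => φ 0 := by
      funext ω
      congr 1
      simp [dotp]
    rw [hz]
    refine ⟨integrable_const _, ?_⟩
    rw [integral_const]
    simp only [probReal_univ, one_smul]
    exact hJensen φ hφ hint
  -- convexity
  have hconv : Convex ℝ (Bset μ Y X) := by
    intro β₁ h₁ β₂ h₂ a b ha hb hab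
    intro φ hφ hint
    obtain ⟨I₁, le₁⟩ := h₁ φ hφ hint
    obtain ⟨I₂, le₂⟩ := h₂ φ hφ hint
    simp only [hwdef] at I₁ le₁ I₂ le₂ ⊢
    obtain ⟨m, hm⟩ := convexOn_exists_affine_le hφ
    have hcont : Continuous φ := hφcont φ hφ
    have hfU : ∀ ω : Ω, φ (w (a • β₁ + b • β₂) ω) ≤ a * φ (w β₁ ω) + b * φ (w β₂ ω) := by
      intro ω
      rw [hwlin a b β₁ β₂ ω]
      have := hφ.2 (mem_univ (w β₁ ω)) (mem_univ (w β₂ ω)) ha hb hab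
      simpa [smul_eq_mul] using this
    have hLf : ∀ ω : Ω, φ 0 + m * w (a • β₁ + b • β₂) ω ≤ φ (w (a • β₁ + b • β₂) ω) :=
      fun ω => hm _
    have hUint : Integrable (fun ω => a * φ (w β₁ ω) + b * φ (w β₂ ω)) μ :=
      (I₁.const_mul a).add (I₂.const_mul b)
    have hLint : Integrable (fun ω => φ 0 + m * w (a • β₁ + b • β₂) ω) μ :=
      (integrable_const _).add (((hwint _)).const_mul m)
    have hfmeas : AEStronglyMeasurable (fun ω => φ (w (a • β₁ + b • β₂) ω)) μ :=
      (hcont.measurable.comp (hwm _)).aestronglyMeasurable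
    have hfint : Integrable (fun ω => φ (w (a • β₁ + b • β₂) ω)) μ := by
      refine (hUint.abs.add hLint.abs).mono' hfmeas (Eventually.of_forall fun ω => ?_)
      have h1 := hfU ω
      have h2 := hLf ω
      have h3 := le_abs_self (a * φ (w β₁ ω) + b * φ (w β₂ ω))
      have h4 := neg_abs_le (φ 0 + m * w (a • β₁ + b • β₂) ω)
      have h5 := abs_nonneg (a * φ (w β₁ ω) + b * φ (w β₂ ω))
      have h6 := abs_nonneg (φ 0 + m * w (a • β₁ + b • β₂) ω)
      rw [Real.norm_eq_abs, Pi.add_apply, abs_le]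
      constructor <;> linarith
    refine ⟨hfint, ?_⟩
    calc ∫ ω, φ (w (a • β₁ + b • β₂) ω) ∂μ
        ≤ ∫ ω, (a * φ (w β₁ ω) + b * φ (w β₂ ω)) ∂μ :=
          integral_mono hfint hUint hfU
      _ = a * ∫ ω, φ (w β₁ ω) ∂μ + b * ∫ ω, φ (w β₂ ω) ∂μ := by
          rw [integral_add (I₁.const_mul a) (I₂.const_mul b), integral_const_mul,
            integral_const_mul]
      _ ≤ a * ∫ ω, φ (cent μ Y ω) ∂μ + b * ∫ ω, φ (cent μ Y ω) ∂μ := by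
          have := mul_le_mul_of_nonneg_left le₁ ha
          have := mul_le_mul_of_nonneg_left le₂ hb
          linarith
      _ = ∫ ω, φ (cent μ Y ω) ∂μ := by rw [← add_mul, hab, one_mul]
  -- quadratic form
  have hterm : ∀ (β : EuclideanSpace ℝ (Fin p)) (i j : Fin p),
      Integrable (fun ω => (Xc i ω * β i) * (Xc j ω * β j)) μ := by
    intro β i j
    have h := (l2mul (hXc2 i) (hXc2 j)).const_mul (β i * β j)
    exact h.congr (Eventually.of_forall fun ω => by ring)
  have hMij : ∀ i j, covMatrix μ X i j = ∫ ω, Xc i ω * Xc j ω ∂μ := by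
    intro i j
    rfl
  have key : ∀ β : EuclideanSpace ℝ (Fin p),
      ∫ ω, (w β ω) ^ 2 ∂μ = ∑ i, ∑ j, β i * covMatrix μ X i j * β j := by
    intro β
    have h1 : (fun ω => (w β ω) ^ 2)
        = fun ω => ∑ i, ∑ j, (Xc i ω * β i) * (Xc j ω * β j) := by
      funext ω
      rw [show w β ω = ∑ i, Xc i ω * β i from rfl, sq, Finset.sum_mul_sum]
    rw [h1, integral_finset_sum _ fun i _ => integrable_finset_sum _ fun j _ => hterm β i j]
    refine Finset.sum_congr rfl fun i _ => ?_
    rw [integral_finset_sum _ fun j _ => hterm β i j]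
    refine Finset.sum_congr rfl fun j _ => ?_
    have h2 : (fun ω => (Xc i ω * β i) * (Xc j ω * β j))
        = fun ω => (β i * β j) * (Xc i ω * Xc j ω) := by funext ω; ring
    rw [h2, integral_const_mul, hMij i j]
    ring
  have hvar : ∫ ω, (cent μ Y ω) ^ 2 ∂μ = variance Y μ := by
    rw [variance_eq_integral hYm.aemeasurable]
    rfl
  have hsub : Bset μ Y X ⊆ {β | ∑ i, ∑ j, β i * covMatrix μ X i j * β j ≤ variance Y μ} := by
    intro β hβ
    have hsq : ConvexOn ℝ Set.univ (fun x : ℝ => x ^ 2) := Even.convexOn_pow even_two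
    have hYint2 : Integrable (fun ω => (cent μ Y ω) ^ 2) μ := hYc2.integrable_sq
    obtain ⟨hI, hle⟩ := hβ (fun x => x ^ 2) hsq hYint2
    simp only [hwdef] at hle
    rw [key β] at hle
    rw [hvar] at hle
    exact hle
  -- closedness
  have hclosed : IsClosed (Bset μ Y X) := by
    refine IsSeqClosed.isClosed ?_
    intro βs β hmem hlim
    intro φ hφ hint
    obtain ⟨m, hm⟩ := convexOn_exists_affine_le hφ
    have hcont : Continuous φ := hφcont φ hφ
    set C : ℝ := ∫ ω, φ (cent μ Y ω) ∂μ with hC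
    set D : ℝ := C - φ 0 with hD
    have hDnn : 0 ≤ D := sub_nonneg.mpr (hJensen φ hφ hint)
    set g : ℝ → ℝ := fun x => φ x - (φ 0 + m * x) with hg
    have hgnn : ∀ x, 0 ≤ g x := fun x => sub_nonneg.mpr (hm x)
    have hgcont : Continuous g :=
      hcont.sub (continuous_const.add (continuous_const.mul continuous_id))
    have hIn : ∀ n, Integrable (fun ω => φ (w (βs n) ω)) μ := by
      intro n
      have h := (hmem n φ hφ hint).1
      simpa only [hwdef] using h
    have hlen : ∀ n, ∫ ω, φ (w (βs n) ω) ∂μ ≤ C := by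
      intro n
      have h := (hmem n φ hφ hint).2
      simpa only [hwdef] using h
    have hgn_int : ∀ n, Integrable (fun ω => g (w (βs n) ω)) μ := by
      intro n
      exact (hIn n).sub ((integrable_const _).add ((hwint _).const_mul m))
    have hgn_eq : ∀ n, ∫ ω, g (w (βs n) ω) ∂μ = (∫ ω, φ (w (βs n) ω) ∂μ) - φ 0 := by
      intro n
      have haux2 : Integrable (fun ω => m * w (βs n) ω) μ := (hwint _).const_mul m
      have haux : Integrable (fun ω => φ 0 + m * w (βs n) ω) μ :=
        (integrable_const _).add haux2
      rw [show (fun ω => g (w (βs n) ω))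
          = fun ω => φ (w (βs n) ω) - (φ 0 + m * w (βs n) ω) from rfl]
      rw [integral_sub (hIn n) haux, integral_add (integrable_const _) haux2,
        integral_const_mul, hwmean, integral_const]
      simp [measure_univ]
    have hgn_le : ∀ n, ∫ ω, g (w (βs n) ω) ∂μ ≤ D := by
      intro n
      rw [hgn_eq n, hD]
      exact sub_le_sub_right (hlen n) _
    -- pointwise convergence
    have hcoord : ∀ i, Tendsto (fun n => βs n i) atTop (nhds (β i)) := by
      intro i
      exact ((EuclideanSpace.proj i : EuclideanSpace ℝ (Fin p) →L[ℝ] ℝ).continuous.tendsto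
        β).comp hlim
    have hwconv : ∀ ω, Tendsto (fun n => w (βs n) ω) atTop (nhds (w β ω)) := by
      intro ω
      refine tendsto_finset_sum _ fun i _ => ?_
      exact (hcoord i).const_mul (Xc i ω)
    have hgconv : ∀ ω, Tendsto (fun n => g (w (βs n) ω)) atTop (nhds (g (w β ω))) :=
      fun ω => (hgcont.tendsto _).comp (hwconv ω)
    -- Fatou
    have hlin : ∫⁻ ω, ENNReal.ofReal (g (w β ω)) ∂μ ≤ ENNReal.ofReal D := by
      have step1 : ∫⁻ ω, ENNReal.ofReal (g (w β ω)) ∂μ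
          = ∫⁻ ω, liminf (fun n => ENNReal.ofReal (g (w (βs n) ω))) atTop ∂μ := by
        refine lintegral_congr fun ω => ?_
        exact (((ENNReal.continuous_ofReal.tendsto _).comp (hgconv ω)).liminf_eq).symm
      have step2 : ∫⁻ ω, liminf (fun n => ENNReal.ofReal (g (w (βs n) ω))) atTop ∂μ
          ≤ liminf (fun n => ∫⁻ ω, ENNReal.ofReal (g (w (βs n) ω)) ∂μ) atTop := by
        refine lintegral_liminf_le fun n => ?_
        exact ENNReal.measurable_ofReal.comp (hgcont.measurable.comp (hwm (βs n)))
      have step3 : ∀ n, ∫⁻ ω, ENNReal.ofReal (g (w (βs n) ω)) ∂μ ≤ ENNReal.ofReal D := by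
        intro n
        rw [← ofReal_integral_eq_lintegral_ofReal (hgn_int n)
          (Eventually.of_forall fun ω => hgnn _)]
        exact ENNReal.ofReal_le_ofReal (hgn_le n)
      calc ∫⁻ ω, ENNReal.ofReal (g (w β ω)) ∂μ
          ≤ liminf (fun n => ∫⁻ ω, ENNReal.ofReal (g (w (βs n) ω)) ∂μ) atTop := by
            rw [step1]; exact step2
        _ ≤ ENNReal.ofReal D := by
            refine liminf_le_of_frequently_le (Frequently.of_forall step3)
    have hgβmeas : AEStronglyMeasurable (fun ω => g (w β ω)) μ :=
      (hgcont.measurable.comp (hwm β)).aestronglyMeasurable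
    have hgβint : Integrable (fun ω => g (w β ω)) μ := by
      refine ⟨hgβmeas, ?_⟩
      rw [hasFiniteIntegral_iff_ofReal (Eventually.of_forall fun ω => hgnn _)]
      exact lt_of_le_of_lt hlin ENNReal.ofReal_lt_top
    have hgβle : ∫ ω, g (w β ω) ∂μ ≤ D := by
      rw [integral_eq_lintegral_of_nonneg_ae (Eventually.of_forall fun ω => hgnn _) hgβmeas]
      calc (∫⁻ ω, ENNReal.ofReal (g (w β ω)) ∂μ).toReal
          ≤ (ENNReal.ofReal D).toReal := ENNReal.toReal_mono ENNReal.ofReal_ne_top hlin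
        _ = D := ENNReal.toReal_ofReal hDnn
    have hφβint : Integrable (fun ω => φ (w β ω)) μ := by
      have h := hgβint.add ((integrable_const (φ 0)).add ((hwint β).const_mul m))
      exact h.congr (Eventually.of_forall fun ω => by simp only [hg, Pi.add_apply]; ring)
    have hφβle : ∫ ω, φ (w β ω) ∂μ ≤ C := by
      have heq : ∫ ω, φ (w β ω) ∂μ = (∫ ω, g (w β ω) ∂μ) + φ 0 := by
        have h2 : (fun ω => φ (w β ω))
            = fun ω => g (w β ω) + (φ 0 + m * w β ω) := by
          funext ω; simp only [hg, Pi.add_apply]; ring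
        have haux2 : Integrable (fun ω => m * w β ω) μ := (hwint β).const_mul m
        have haux : Integrable (fun ω => φ 0 + m * w β ω) μ :=
          (integrable_const _).add haux2
        rw [h2, integral_add hgβint haux, integral_add (integrable_const _) haux2,
          integral_const_mul, hwmean, integral_const]
        simp [measure_univ]
      rw [heq]
      linarith
    constructor
    · simpa only [hwdef] using hφβint
    · simp only [hwdef]
      exact hφβle
  -- positivity of the quadratic form
  have hQpos : ∀ β : EuclideanSpace ℝ (Fin p), β ≠ 0 → 0 < ∫ ω, (w β ω) ^ 2 ∂μ := by
    intro β hβne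
    rcases (integral_nonneg (f := fun ω => (w β ω) ^ 2) fun ω => sq_nonneg (w β ω)).lt_or_eq with h | h
    · exact h
    · exfalso
      have hz : (fun ω => (w β ω) ^ 2) =ᵐ[μ] 0 := by
        rw [← integral_eq_zero_iff_of_nonneg (fun ω => sq_nonneg (w β ω)) (hw2 β).integrable_sq]
        exact h.symm
      have hwz : w β =ᵐ[μ] 0 := by
        filter_upwards [hz] with ω hω
        exact sq_eq_zero_iff.mp hω
      have hMv : (covMatrix μ X).mulVec β = 0 := by
        funext j
        have hterm2 : ∀ i, Integrable (fun ω => Xc j ω * (Xc i ω * β i)) μ := by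
          intro i
          exact ((l2mul (hXc2 j) (hXc2 i)).mul_const (β i)).congr
            (Eventually.of_forall fun ω => by ring)
        have h1 : (covMatrix μ X).mulVec β j = ∑ i, covMatrix μ X j i * β i := by
          simp [Matrix.mulVec, dotProduct]
        have h2 : ∀ i, covMatrix μ X j i * β i = ∫ ω, Xc j ω * (Xc i ω * β i) ∂μ := by
          intro i
          rw [hMij j i, ← integral_mul_const]
          congr 1; funext ω; ring
        have h3 : ∀ᵐ ω ∂μ, (∑ i, Xc j ω * (Xc i ω * β i)) = 0 := by
          filter_upwards [hwz] with ω hω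
          have h4 : (∑ i, Xc j ω * (Xc i ω * β i)) = Xc j ω * w β ω := by
            rw [show w β ω = ∑ i, Xc i ω * β i from rfl, Finset.mul_sum]
          rw [h4, show w β ω = (0 : Ω → ℝ) ω from hω]
          simp
        have h5 : (covMatrix μ X).mulVec β j = 0 := by
          rw [h1]
          rw [Finset.sum_congr rfl fun i _ => h2 i]
          rw [← integral_finset_sum _ fun i _ => hterm2 i]
          rw [integral_congr_ae h3, integral_zero]
        exact h5
      exact hVarX (Matrix.exists_mulVec_eq_zero_iff.mp ⟨β, fun h => hβne (by ext i; exact congrFun h i), hMv⟩)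
  -- continuity of the quadratic form
  have hQc : Continuous (fun β : EuclideanSpace ℝ (Fin p) =>
      ∑ i, ∑ j, β i * covMatrix μ X i j * β j) := by
    refine continuous_finset_sum _ fun i _ => continuous_finset_sum _ fun j _ => ?_
    exact ((EuclideanSpace.proj i : EuclideanSpace ℝ (Fin p) →L[ℝ] ℝ).continuous.mul
      continuous_const).mul (EuclideanSpace.proj j : EuclideanSpace ℝ (Fin p) →L[ℝ] ℝ).continuous
  have hQhom : ∀ (r : ℝ) (β : EuclideanSpace ℝ (Fin p)),
      (∑ i, ∑ j, (r • β) i * covMatrix μ X i j * (r • β) j)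
        = r ^ 2 * ∑ i, ∑ j, β i * covMatrix μ X i j * β j := by
    intro r β
    rw [Finset.mul_sum]
    refine Finset.sum_congr rfl fun i _ => ?_
    rw [Finset.mul_sum]
    refine Finset.sum_congr rfl fun j _ => ?_
    have h1 : (r • β) i = r * β i := rfl
    have h2 : (r • β) j = r * β j := rfl
    rw [h1, h2]; ring
  refine ⟨h0mem, hconv, ?_, hsub⟩
  by_cases hp : p = 0
  · subst hp
    haveI : Subsingleton (EuclideanSpace ℝ (Fin 0)) :=
      ⟨fun a b => by ext i; exact i.elim0⟩
    have hs0 : Bset μ Y X ⊆ {0} := fun β _ => Subsingleton.elim β 0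
    exact isCompact_singleton.of_isClosed_subset hclosed hs0
  · set Q : EuclideanSpace ℝ (Fin p) → ℝ :=
      fun β => ∑ i, ∑ j, β i * covMatrix μ X i j * β j with hQdef
    have hsphere : (Metric.sphere (0 : EuclideanSpace ℝ (Fin p)) 1).Nonempty := by
      refine ⟨EuclideanSpace.single ⟨0, Nat.pos_of_ne_zero hp⟩ (1 : ℝ), ?_⟩
      simp [mem_sphere_zero_iff_norm, EuclideanSpace.norm_single]
    obtain ⟨u, huS, humin⟩ := (isCompact_sphere (0 : EuclideanSpace ℝ (Fin p)) 1).exists_isMinOn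
      hsphere hQc.continuousOn
    have hu1 : ‖u‖ = 1 := by simpa [mem_sphere_zero_iff_norm] using huS
    have hune : u ≠ 0 := by
      intro h; rw [h, norm_zero] at hu1; exact one_ne_zero hu1.symm
    have hmq : 0 < Q u := by
      have h := hQpos u hune
      rwa [key u] at h
    have hbddB : Bornology.IsBounded (Bset μ Y X) := by
      rw [isBounded_iff_forall_norm_le]
      refine ⟨Real.sqrt (variance Y μ / Q u), fun β hβ => ?_⟩
      have hQβ : Q β ≤ variance Y μ := hsub hβ
      have hkey : ‖β‖ ^ 2 * Q u ≤ variance Y μ := by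
        rcases eq_or_ne β 0 with h0 | h0
        · simpa [h0] using hVarY.le
        · have hn : (0:ℝ) < ‖β‖ := norm_pos_iff.mpr h0
          have h1 : ‖β‖⁻¹ • β ∈ Metric.sphere (0 : EuclideanSpace ℝ (Fin p)) 1 := by
            simp [mem_sphere_zero_iff_norm, norm_smul,
              abs_of_nonneg (inv_nonneg.mpr hn.le), inv_mul_cancel₀ hn.ne']
          have h2 : Q u ≤ Q (‖β‖⁻¹ • β) := humin h1
          have h3 : Q (‖β‖⁻¹ • β) = (‖β‖⁻¹) ^ 2 * Q β := hQhom _ _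
          rw [h3] at h2
          have h4 : ‖β‖ ^ 2 * Q u ≤ ‖β‖ ^ 2 * ((‖β‖⁻¹) ^ 2 * Q β) :=
            mul_le_mul_of_nonneg_left h2 (by positivity)
          have h5 : ‖β‖ ^ 2 * ((‖β‖⁻¹) ^ 2 * Q β) = Q β := by
            field_simp
          rw [h5] at h4
          exact h4.trans hQβ
      have h6 : ‖β‖ ^ 2 ≤ variance Y μ / Q u := by
        rw [le_div_iff₀ hmq]
        exact hkey
      calc ‖β‖ = Real.sqrt (‖β‖ ^ 2) := (Real.sqrt_sq (norm_nonneg β)).symm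
        _ ≤ Real.sqrt (variance Y μ / Q u) := Real.sqrt_le_sqrt h6
    exact Metric.isCompact_of_isClosed_isBounded hclosed hbddB
end
end

section
/- Suppose Assumption 1 holds and let φ : ℝ → ℝ be a convex function with E[φ(Y)] < ∞. If E[φ(X'β)] = ∞ for all β ≠ 0_p, then the identified set B = {β ∈ ℝ^p : Y₀ ⪰cx X₀'β} equals {0_p}; in particular β₀ = 0_p. -/
open MeasureTheory ProbabilityTheory Filter Set

noncomputable section

variable {Ω : Type*} [MeasurableSpace Ω]

section Aux

lemma convexOn_continuous {φ : ℝ → ℝ} (hφ : ConvexOn ℝ Set.univ φ) : Continuous φ := by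
  rw [← continuousOn_univ]
  exact hφ.continuousOn isOpen_univ

lemma exists_subgradient {φ : ℝ → ℝ} (hφ : ConvexOn ℝ Set.univ φ) (q : ℝ) :
    ∃ d : ℝ, ∀ t : ℝ, φ q + d * (t - q) ≤ φ t := by
  set S : Set ℝ := (fun u => (φ u - φ q) / (u - q)) '' Set.Ioi q with hS
  have hne : S.Nonempty := ⟨_, ⟨q + 1, by simp, rfl⟩⟩
  have hlb : ∀ s ∈ S, (φ q - φ (q - 1)) / (q - (q - 1)) ≤ s := by
    rintro s ⟨u, hu, rfl⟩
    exact hφ.slope_mono_adjacent (mem_univ _) (mem_univ _) (by linarith) hu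
  have hbdd : BddBelow S := ⟨_, hlb⟩
  refine ⟨sInf S, fun t => ?_⟩
  rcases lt_trichotomy t q with h | h | h
  · have hle : (φ q - φ t) / (q - t) ≤ sInf S := by
      apply le_csInf hne
      rintro s ⟨u, hu, rfl⟩
      exact hφ.slope_mono_adjacent (mem_univ _) (mem_univ _) h hu
    rw [div_le_iff₀ (by linarith : (0:ℝ) < q - t)] at hle
    nlinarith
  · simp [h]
  · have hmem : (φ t - φ q) / (t - q) ∈ S := ⟨t, h, rfl⟩
    have h2 := csInf_le hbdd hmem
    rw [le_div_iff₀ (by linarith : (0:ℝ) < t - q)] at h2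
    linarith

/-- If affine minorants touching at every rational are all below `g` at `t`, then `φ t ≤ g`. -/
lemma sup_rat_minorants {φ : ℝ → ℝ} (hφ : ConvexOn ℝ Set.univ φ) (d : ℚ → ℝ)
    (hd : ∀ q : ℚ, ∀ t : ℝ, φ q + d q * (t - q) ≤ φ t)
    (t g : ℝ) (h : ∀ q : ℚ, φ q + d q * (t - (q : ℝ)) ≤ g) : φ t ≤ g := by
  have hc : Continuous φ := convexOn_continuous hφ
  -- choose rationals approaching t
  have hex : ∀ n : ℕ, ∃ q : ℚ, t - 1 / (n + 1) < (q : ℝ) ∧ (q : ℝ) < t := by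
    intro n
    have hpos : (0:ℝ) < 1 / ((n : ℝ) + 1) := by positivity
    exact exists_rat_btwn (by linarith : t - 1 / ((n : ℝ) + 1) < t)
  choose u hu1 hu2 using hex
  have htend : Tendsto (fun n : ℕ => ((u n : ℝ))) atTop (nhds t) := by
    have h1 : Tendsto (fun n : ℕ => t - 1 / ((n : ℝ) + 1)) atTop (nhds t) := by
      simpa using (tendsto_const_nhds (x := t)).sub tendsto_one_div_add_atTop_nhds_zero_nat
    exact tendsto_of_tendsto_of_tendsto_of_le_of_le h1 tendsto_const_nhds
      (fun n => (hu1 n).le) (fun n => (hu2 n).le)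
  -- bounds on d q
  have hdub : ∀ q : ℚ, d q ≤ φ (q + 1) - φ q := by
    intro q
    have := hd q ((q : ℝ) + 1)
    simp only [add_sub_cancel_left, mul_one] at this
    linarith
  have hdlb : ∀ q : ℚ, φ q - φ (q - 1) ≤ d q := by
    intro q
    have := hd q ((q : ℝ) - 1)
    have h' : φ q + d q * (-1) ≤ φ ((q:ℝ) - 1) := by
      convert this using 3 <;> ring
    linarith
  have habs : ∀ q : ℚ, |d q| ≤ |φ ((q:ℝ) + 1) - φ q| + |φ (q:ℝ) - φ ((q:ℝ) - 1)| := by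
    intro q
    rw [abs_le]
    constructor
    · have := hdlb q
      have h1 := neg_abs_le (φ (q:ℝ) - φ ((q:ℝ) - 1))
      have h2 := abs_nonneg (φ ((q:ℝ) + 1) - φ (q:ℝ))
      linarith
    · have := hdub q
      have h1 := le_abs_self (φ ((q:ℝ) + 1) - φ (q:ℝ))
      have h2 := abs_nonneg (φ (q:ℝ) - φ ((q:ℝ) - 1))
      linarith
  -- the product term tends to zero
  have hprod : Tendsto (fun n : ℕ => d (u n) * (t - (u n : ℝ))) atTop (nhds 0) := by
    apply squeeze_zero_norm
      (f := fun n : ℕ => d (u n) * (t - (u n : ℝ)))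
      (a := fun n : ℕ => (|φ ((u n : ℝ) + 1) - φ (u n : ℝ)| + |φ (u n : ℝ) - φ ((u n : ℝ) - 1)|)
        * |t - (u n : ℝ)|)
    · intro n
      rw [Real.norm_eq_abs, abs_mul]
      exact mul_le_mul_of_nonneg_right (habs _) (abs_nonneg _)
    · have hB : Tendsto (fun n : ℕ =>
          |φ ((u n : ℝ) + 1) - φ (u n : ℝ)| + |φ (u n : ℝ) - φ ((u n : ℝ) - 1)|) atTop
          (nhds (|φ (t + 1) - φ t| + |φ t - φ (t - 1)|)) := by
        apply Tendsto.add
        · exact (continuous_abs.comp ((hc.comp (continuous_id.add continuous_const)).sub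
            hc)).continuousAt.tendsto.comp htend
        · exact (continuous_abs.comp (hc.sub
            (hc.comp (continuous_id.sub continuous_const)))).continuousAt.tendsto.comp htend
      have hA : Tendsto (fun n : ℕ => |t - (u n : ℝ)|) atTop (nhds 0) := by
        have : Tendsto (fun n : ℕ => t - (u n : ℝ)) atTop (nhds (t - t)) :=
          tendsto_const_nhds.sub htend
        simpa using this.abs
      simpa using hB.mul hA
  have hφt : Tendsto (fun n : ℕ => φ (u n : ℝ) + d (u n) * (t - (u n : ℝ))) atTop (nhds (φ t)) := by
    have h1 : Tendsto (fun n : ℕ => φ (u n : ℝ)) atTop (nhds (φ t)) :=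
      hc.continuousAt.tendsto.comp htend
    simpa using h1.add hprod
  exact le_of_tendsto hφt (Filter.Eventually.of_forall (fun n => h (u n)))

/-- integrable if sandwiched between integrable functions. -/
lemma integrable_of_bounds {μ : Measure Ω} {f g h : Ω → ℝ} (hf : AEStronglyMeasurable f μ)
    (hg : Integrable g μ) (hh : Integrable h μ)
    (h1 : ∀ᵐ ω ∂μ, g ω ≤ f ω) (h2 : ∀ᵐ ω ∂μ, f ω ≤ h ω) : Integrable f μ := by
  refine Integrable.mono' (hg.abs.add hh.abs) hf ?_
  filter_upwards [h1, h2] with ω hg1 hh1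
  rw [Real.norm_eq_abs, abs_le]
  constructor
  · have := neg_abs_le (g ω); have := abs_nonneg (h ω); simp only [Pi.add_apply]; linarith [neg_abs_le (g ω), abs_nonneg (h ω)]
  · simp only [Pi.add_apply]; linarith [le_abs_self (h ω), abs_nonneg (g ω)]

end Aux

section AuxStmt5

def dlin {p : ℕ} (β : EuclideanSpace ℝ (Fin p)) : EuclideanSpace ℝ (Fin p) →L[ℝ] ℝ :=
  LinearMap.toContinuousLinearMap
    { toFun := fun x => dotp x β
      map_add' := fun x y => by
        simp [dotp, PiLp.add_apply, add_mul, Finset.sum_add_distrib]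
      map_smul' := fun c x => by
        simp [dotp, PiLp.smul_apply, smul_eq_mul, Finset.mul_sum, mul_assoc] }

@[simp] lemma dlin_apply {p : ℕ} (β x : EuclideanSpace ℝ (Fin p)) : dlin β x = dotp x β := rfl

lemma dotp_smul_right {p : ℕ} (c : ℝ) (x β : EuclideanSpace ℝ (Fin p)) :
    dotp x (c • β) = c * dotp x β := by
  simp only [dotp, PiLp.smul_apply, smul_eq_mul, Finset.mul_sum]
  exact Finset.sum_congr rfl fun i _ => by ring

lemma dotp_centV {p : ℕ} (μ : Measure Ω) {X : Ω → EuclideanSpace ℝ (Fin p)}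
    (hXi : Integrable X μ) (β : EuclideanSpace ℝ (Fin p)) (ω : Ω) :
    dotp (centV μ X ω) β = dotp (X ω) β - ∫ ω', dotp (X ω') β ∂μ := by
  have h1 : ∫ ω', dotp (X ω') β ∂μ = dotp (∫ ω', X ω' ∂μ) β := by
    simpa using (dlin β).integral_comp_comm hXi
  have h2 : dotp (X ω - ∫ ω', X ω' ∂μ) β
      = dotp (X ω) β - dotp (∫ ω', X ω' ∂μ) β := by
    simpa using (dlin β).map_sub (X ω) (∫ ω', X ω' ∂μ)
  rw [centV, h1, h2]

lemma convexOn_affine_comp {φ : ℝ → ℝ} (hφ : ConvexOn ℝ Set.univ φ) (a c : ℝ) :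
    ConvexOn ℝ Set.univ (fun t => φ (a * t + c)) := by
  refine ⟨convex_univ, fun x _ y _ s r hs hr hsr => ?_⟩
  have h := hφ.2 (mem_univ (a * x + c)) (mem_univ (a * y + c)) hs hr hsr
  simp only [smul_eq_mul] at h ⊢
  have e : a * (s * x + r * y) + c = s * (a * x + c) + r * (a * y + c) := by
    linear_combination c * hsr.symm
  rw [e]
  exact h

lemma key_half {μ : Measure Ω} [IsProbabilityMeasure μ] {φ : ℝ → ℝ}
    (hφ : ConvexOn ℝ Set.univ φ) {f : Ω → ℝ} (hfi : Integrable f μ)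
    (hφf : Integrable (fun ω => φ (f ω)) μ) (c : ℝ) :
    Integrable (fun ω => φ (f ω / 2 + c)) μ := by
  have hc : Continuous φ := convexOn_continuous hφ
  obtain ⟨d, hd⟩ := exists_subgradient hφ 0
  apply integrable_of_bounds (g := fun ω => φ 0 + d * (f ω / 2 + c))
    (h := fun ω => φ (f ω) / 2 + φ (2 * c) / 2)
  · exact hc.comp_aestronglyMeasurable
      (((hfi.div_const 2).add (integrable_const c)).aestronglyMeasurable)
  · exact (integrable_const _).add (((hfi.div_const 2).add (integrable_const c)).const_mul d)
  · exact (hφf.div_const 2).add (integrable_const _)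
  · refine Eventually.of_forall fun ω => ?_
    simpa using hd (f ω / 2 + c)
  · refine Eventually.of_forall fun ω => ?_
    have h := hφ.2 (mem_univ (f ω)) (mem_univ (2 * c))
      (by norm_num : (0:ℝ) ≤ 1/2) (by norm_num : (0:ℝ) ≤ 1/2) (by norm_num)
    simp only [smul_eq_mul] at h
    have e : f ω / 2 + c = 1/2 * f ω + 1/2 * (2 * c) := by ring
    rw [e]
    linarith

end AuxStmt5

/-- Under Assumption 1, if `φ` is convex with `E[φ(Y)] < ∞` and
`E[φ(X'β)] = ∞` for all `β ≠ 0`, then the identified set is `{0}`; in particular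
`β₀ = 0`. -/
theorem stmt5 (μ : Measure Ω) [IsProbabilityMeasure μ] {p : ℕ}
    (Y : Ω → ℝ) (X : Ω → EuclideanSpace ℝ (Fin p))
    (hYm : Measurable Y) (hXm : Measurable X)
    (hY2 : MemLp Y 2 μ) (hX2 : MemLp X 2 μ)
    (hVarY : 0 < variance Y μ) (hVarX : (covMatrix μ X).det ≠ 0)
    (α₀ : ℝ) (β₀ : EuclideanSpace ℝ (Fin p))
    (hmod : μ[Y | MeasurableSpace.comap X inferInstance]
      =ᵐ[μ] fun ω => α₀ + dotp (X ω) β₀)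
    (φ : ℝ → ℝ) (hφ : ConvexOn ℝ Set.univ φ)
    (hφY : Integrable (fun ω => φ (Y ω)) μ)
    (hφX : ∀ β : EuclideanSpace ℝ (Fin p), β ≠ 0 →
      ¬ Integrable (fun ω => φ (dotp (X ω) β)) μ) :
    Bset μ Y X = {0} ∧ β₀ = 0 := by
  classical
  have hc : Continuous φ := convexOn_continuous hφ
  have hYint : Integrable Y μ := hY2.integrable one_le_two
  have hXint : Integrable X μ := hX2.integrable one_le_two
  -- any nonzero member of the identified set gives a contradiction
  have hBsub : ∀ β ∈ Bset μ Y X, β = 0 := by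
    intro β hβ
    by_contra hβne
    set m : ℝ := ∫ ω, dotp (X ω) β ∂μ with hm
    set ψ : ℝ → ℝ := fun t => φ (1/2 * t + m/2) with hψdef
    have hψ : ConvexOn ℝ Set.univ ψ := convexOn_affine_comp hφ _ _
    have hψY : Integrable (fun ω => ψ (cent μ Y ω)) μ := by
      have h1 := key_half hφ hYint hφY ((m - ∫ ω, Y ω ∂μ)/2)
      refine h1.congr (Eventually.of_forall fun ω => ?_)
      simp only [hψdef, cent]
      congr 1
      ring
    obtain ⟨hint, -⟩ := hβ ψ hψ hψY
    have hcontr : Integrable (fun ω => φ (dotp (X ω) ((1/2 : ℝ) • β))) μ := by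
      refine hint.congr (Eventually.of_forall fun ω => ?_)
      simp only [hψdef]
      rw [dotp_centV μ hXint β ω, dotp_smul_right]
      congr 1
      ring
    exact hφX _ (smul_ne_zero (by norm_num) hβne) hcontr
  -- `0` belongs to the identified set, by Jensen's inequality
  have h0 : (0 : EuclideanSpace ℝ (Fin p)) ∈ Bset μ Y X := by
    intro ψ hψ hint
    have hz : ∀ ω, dotp (centV μ X ω) (0 : EuclideanSpace ℝ (Fin p)) = 0 := fun ω => by
      simp [dotp]
    simp only [hz]
    refine ⟨integrable_const _, ?_⟩
    rw [integral_const]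
    simp only [measure_univ, probReal_univ, ENNReal.toReal_one, one_smul]
    have hcentint : Integrable (cent μ Y) μ := hYint.sub (integrable_const _)
    have hEY0 : ∫ ω, cent μ Y ω ∂μ = 0 := by
      simp only [cent]
      rw [integral_sub hYint (integrable_const _), integral_const]
      simp
    have hJ := hψ.map_integral_le (hψ.continuousOn isOpen_univ) isClosed_univ
      (Eventually.of_forall fun _ => mem_univ _) hcentint
      (by simpa [Function.comp_def] using hint)
    rwa [hEY0] at hJ
  -- β₀ = 0, via conditional Jensen
  have hβ₀ : β₀ = 0 := by
    by_contra hβne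
    have hWint : Integrable (fun ω => α₀ + dotp (X ω) β₀) μ :=
      (integrable_const α₀).add ((dlin β₀).integrable_comp hXint)
    have hmXle : MeasurableSpace.comap X inferInstance ≤ ‹MeasurableSpace Ω› :=
      hXm.comap_le
    choose d hd using fun q : ℚ => exists_subgradient hφ (q : ℝ)
    have hq : ∀ q : ℚ, ∀ᵐ ω ∂μ,
        φ (q:ℝ) + d q * ((α₀ + dotp (X ω) β₀) - (q:ℝ)) ≤
          (μ[fun ω => φ (Y ω)|MeasurableSpace.comap X inferInstance]) ω := by
      intro q
      set c : ℝ := φ (q:ℝ) - d q * (q:ℝ) with hcdef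
      set F : Ω → ℝ := (d q) • Y + (fun _ => c) with hFdef
      have hFint : Integrable F μ := (hYint.smul (d q)).add (integrable_const c)
      have hFle : F ≤ᵐ[μ] fun ω => φ (Y ω) := Eventually.of_forall fun ω => by
        have h := hd q (Y ω)
        simp only [hFdef, Pi.add_apply, Pi.smul_apply, smul_eq_mul, hcdef]
        linarith
      have hmono := condExp_mono (m := MeasurableSpace.comap X inferInstance) hFint hφY hFle
      have h1 : μ[F|MeasurableSpace.comap X inferInstance] =ᵐ[μ]
          fun ω => d q * ((μ[Y|MeasurableSpace.comap X inferInstance]) ω) + c := by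
        have ha := condExp_add (m := MeasurableSpace.comap X inferInstance) (μ := μ)
          (hYint.smul (d q)) (integrable_const c)
        have hs := condExp_smul (m := MeasurableSpace.comap X inferInstance) (μ := μ) (d q) Y
        have hc3 : μ[(fun _ => c)|MeasurableSpace.comap X inferInstance] = fun _ => c :=
          condExp_const hmXle c
        rw [hFdef]
        filter_upwards [ha, hs] with ω ha hs
        rw [ha]
        simp only [Pi.add_apply, Pi.smul_apply, smul_eq_mul] at hs ⊢
        rw [hs, hc3]
      filter_upwards [hmono, h1, hmod] with ω hmono h1 hmod
      have e : φ (q:ℝ) + d q * ((α₀ + dotp (X ω) β₀) - (q:ℝ))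
          = d q * (α₀ + dotp (X ω) β₀) + c := by rw [hcdef]; ring
      rw [e]
      rw [h1, hmod] at hmono
      exact hmono
    have hae : ∀ᵐ ω ∂μ, ∀ q : ℚ,
        φ (q:ℝ) + d q * ((α₀ + dotp (X ω) β₀) - (q:ℝ)) ≤
          (μ[fun ω => φ (Y ω)|MeasurableSpace.comap X inferInstance]) ω :=
      ae_all_iff.mpr hq
    have hub : ∀ᵐ ω ∂μ, φ (α₀ + dotp (X ω) β₀) ≤
        (μ[fun ω => φ (Y ω)|MeasurableSpace.comap X inferInstance]) ω := by
      filter_upwards [hae] with ω hω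
      exact sup_rat_minorants hφ d hd _ _ hω
    obtain ⟨d0, hd0⟩ := exists_subgradient hφ 0
    have hφW : Integrable (fun ω => φ (α₀ + dotp (X ω) β₀)) μ := by
      apply integrable_of_bounds (g := fun ω => φ 0 + d0 * (α₀ + dotp (X ω) β₀))
        (h := μ[fun ω => φ (Y ω)|MeasurableSpace.comap X inferInstance])
      · exact hc.comp_aestronglyMeasurable hWint.aestronglyMeasurable
      · exact (integrable_const _).add (hWint.const_mul d0)
      · exact integrable_condExp
      · exact Eventually.of_forall fun ω => by simpa using hd0 (α₀ + dotp (X ω) β₀)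
      · exact hub
    have hfinal := key_half hφ hWint hφW (-α₀/2)
    have hcontr : Integrable (fun ω => φ (dotp (X ω) ((1/2 : ℝ) • β₀))) μ := by
      refine hfinal.congr (Eventually.of_forall fun ω => ?_)
      show φ ((α₀ + dotp (X ω) β₀) / 2 + -α₀/2) = φ (dotp (X ω) ((1/2 : ℝ) • β₀))
      rw [dotp_smul_right]
      congr 1
      ring
    exact hφX _ (smul_ne_zero (by norm_num) hβne) hcontr
  refine ⟨?_, hβ₀⟩
  ext β
  simp only [mem_singleton_iff]
  exact ⟨fun h => hBsub β h, fun h => h ▸ h0⟩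
end
end

section
/- Suppose Assumption 1 holds, write X = (X₁, X₋₁) with X₁ real-valued and X₋₁ taking values in ℝ^{p−1}, and let φ : ℝ → ℝ be a convex function with E[φ(Y)] < ∞. If E[φ(X₁ β₁)] = ∞ for all β₁ ≠ 0 and E[φ(X₋₁'β₋₁)] < ∞ for all β₋₁ ∈ ℝ^{p−1}, then the projection B₁ = {β₁ : (β₁, β₋₁) ∈ B for some β₋₁ ∈ ℝ^{p−1}} of the identified set B = {β ∈ ℝ^p : Y₀ ⪰cx X₀'β} equals {0}; in particular the first coordinate of β₀ is 0. -/
open MeasureTheory ProbabilityTheory Filter Set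
open scoped Topology

noncomputable section

variable {Ω : Type*} [MeasurableSpace Ω]

section AuxLemmas

variable {Ω' : Type*} {m0 : MeasurableSpace Ω'} {μ' : Measure Ω'} {φ' : ℝ → ℝ}

private lemma convex_cont (hφ : ConvexOn ℝ Set.univ φ') : Continuous φ' := by
  have h := hφ.continuousOn isOpen_univ
  rwa [continuousOn_univ] at h

private lemma support_line (hφ : ConvexOn ℝ Set.univ φ') (t : ℝ) :
    ∃ m : ℝ, ∀ x, φ' t + m * (x - t) ≤ φ' x := by
  set S : Set ℝ := (fun x => (φ' t - φ' x) / (t - x)) '' Set.Iio t with hS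
  have hne : S.Nonempty := ⟨(φ' t - φ' (t - 1)) / (t - (t - 1)), ⟨t - 1, by simp, rfl⟩⟩
  have hbdd : BddAbove S := by
    refine ⟨(φ' (t + 1) - φ' t) / (t + 1 - t), ?_⟩
    rintro s ⟨x, hx, rfl⟩
    exact hφ.slope_mono_adjacent (Set.mem_univ x) (Set.mem_univ (t + 1)) hx (by linarith)
  refine ⟨sSup S, fun x => ?_⟩
  rcases lt_trichotomy x t with hx | rfl | hx
  · have h1 : (φ' t - φ' x) / (t - x) ≤ sSup S := le_csSup hbdd ⟨x, hx, rfl⟩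
    rw [div_le_iff₀ (by linarith)] at h1
    linarith
  · simp
  · have h1 : sSup S ≤ (φ' x - φ' t) / (x - t) := by
      refine csSup_le hne ?_
      rintro s ⟨y, hy, rfl⟩
      exact hφ.slope_mono_adjacent (Set.mem_univ y) (Set.mem_univ x) hy hx
    rw [le_div_iff₀ (by linarith)] at h1
    linarith

private lemma le_of_rat_support (hφ : ConvexOn ℝ Set.univ φ') (mq : ℚ → ℝ)
    (hm : ∀ q : ℚ, ∀ x : ℝ, φ' q + mq q * (x - q) ≤ φ' x)
    {t M : ℝ} (h : ∀ q : ℚ, φ' q + mq q * (t - q) ≤ M) : φ' t ≤ M := by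
  have hcont : Continuous φ' := convex_cont hφ
  have hq : ∀ n : ℕ, ∃ q : ℚ, t < q ∧ (q : ℝ) < t + 1 / ((n : ℝ) + 1) := by
    intro n
    refine exists_rat_btwn ?_
    have h0 : (0 : ℝ) < 1 / ((n : ℝ) + 1) := by positivity
    linarith
  choose q hq1 hq2 using hq
  have htend : Tendsto (fun n => (q n : ℝ)) atTop (𝓝 t) := by
    have hupper : Tendsto (fun n : ℕ => t + 1 / ((n : ℝ) + 1)) atTop (𝓝 t) := by
      have := (tendsto_one_div_add_atTop_nhds_zero_nat :
        Tendsto (fun n : ℕ => 1 / ((n : ℝ) + 1)) atTop (𝓝 0))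
      simpa using tendsto_const_nhds.add this
    exact tendsto_of_tendsto_of_tendsto_of_le_of_le tendsto_const_nhds hupper
      (fun n => (hq1 n).le) (fun n => (hq2 n).le)
  have h1 : Tendsto (fun n => φ' (q n)) atTop (𝓝 (φ' t)) := (hcont.tendsto t).comp htend
  have h2 : Tendsto (fun n => mq (q n) * (t - (q n : ℝ))) atTop (𝓝 0) := by
    apply squeeze_zero_norm
      (a := fun n => (|φ' ((q n : ℝ) + 1) - φ' (q n)| + |φ' (q n) - φ' ((q n : ℝ) - 1)|)
        * |t - (q n : ℝ)|)
    · intro n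
      have hub : mq (q n) ≤ φ' ((q n : ℝ) + 1) - φ' (q n) := by
        have h := hm (q n) ((q n : ℝ) + 1)
        have he : ((q n : ℝ) + 1) - (q n : ℝ) = 1 := by ring
        rw [he, mul_one] at h
        linarith
      have hlb : φ' (q n) - φ' ((q n : ℝ) - 1) ≤ mq (q n) := by
        have h := hm (q n) ((q n : ℝ) - 1)
        have he : ((q n : ℝ) - 1) - (q n : ℝ) = -1 := by ring
        rw [he, mul_neg_one] at h
        linarith
      have habs : |mq (q n)| ≤ |φ' ((q n : ℝ) + 1) - φ' (q n)| + |φ' (q n) - φ' ((q n : ℝ) - 1)| := by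
        rw [abs_le]
        constructor
        · have := neg_abs_le (φ' (q n) - φ' ((q n : ℝ) - 1))
          have := abs_nonneg (φ' ((q n : ℝ) + 1) - φ' (q n))
          linarith
        · have := le_abs_self (φ' ((q n : ℝ) + 1) - φ' (q n))
          have := abs_nonneg (φ' (q n) - φ' ((q n : ℝ) - 1))
          linarith
      calc ‖mq (q n) * (t - (q n : ℝ))‖ = |mq (q n)| * |t - (q n : ℝ)| := abs_mul _ _
      _ ≤ _ := mul_le_mul_of_nonneg_right habs (abs_nonneg _)
    · have hb : Tendsto
          (fun n => |φ' ((q n : ℝ) + 1) - φ' (q n)| + |φ' (q n) - φ' ((q n : ℝ) - 1)|)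
          atTop (𝓝 (|φ' (t + 1) - φ' t| + |φ' t - φ' (t - 1)|)) := by
        have ht1 : Tendsto (fun n => φ' ((q n : ℝ) + 1)) atTop (𝓝 (φ' (t + 1))) :=
          (hcont.tendsto (t + 1)).comp (htend.add_const 1)
        have ht2 : Tendsto (fun n => φ' ((q n : ℝ) - 1)) atTop (𝓝 (φ' (t - 1))) :=
          (hcont.tendsto (t - 1)).comp (htend.sub_const 1)
        exact ((ht1.sub h1).abs).add ((h1.sub ht2).abs)
      have hd : Tendsto (fun n => |t - (q n : ℝ)|) atTop (𝓝 0) := by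
        have := (tendsto_const_nhds (x := t)).sub htend
        simpa using this.abs
      simpa using hb.mul hd
  have hval : Tendsto (fun n => φ' (q n) + mq (q n) * (t - (q n : ℝ))) atTop (𝓝 (φ' t)) := by
    simpa using h1.add h2
  exact le_of_tendsto hval (Eventually.of_forall fun n => h (q n))

private lemma int_aux {f g h : Ω' → ℝ} (hf : Integrable f μ') (hg : Integrable g μ')
    (hfg : ∀ ω, f ω + g ω = h ω) : Integrable h μ' :=
  (hf.add hg).congr (Filter.Eventually.of_forall hfg)

private lemma integrable_sandwich {f l h : Ω' → ℝ} (hfm : AEStronglyMeasurable f μ')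
    (hli : Integrable l μ') (hhi : Integrable h μ')
    (hl : l ≤ᵐ[μ'] f) (hu : f ≤ᵐ[μ'] h) : Integrable f μ' := by
  refine (hhi.abs.add hli.abs).mono' hfm ?_
  filter_upwards [hl, hu] with ω h1 h2
  simp only [Real.norm_eq_abs, Pi.add_apply]
  rw [abs_le]
  constructor
  · have := neg_abs_le (l ω)
    have := abs_nonneg (h ω)
    linarith
  · have := le_abs_self (h ω)
    have := abs_nonneg (l ω)
    linarith

private lemma integrable_phi_mid [IsFiniteMeasure μ'] (hφ : ConvexOn ℝ Set.univ φ')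
    {u v : Ω' → ℝ} (hui : Integrable u μ') (hvi : Integrable v μ')
    (hpu : Integrable (fun ω => φ' (u ω)) μ') (hpv : Integrable (fun ω => φ' (v ω)) μ') :
    Integrable (fun ω => φ' ((u ω + v ω) / 2)) μ' := by
  obtain ⟨m, hm⟩ := support_line hφ 0
  have hmid : Integrable (fun ω => (u ω + v ω) / 2) μ' := (hui.add hvi).div_const 2
  refine integrable_sandwich (f := fun ω => φ' ((u ω + v ω) / 2))
    (l := fun ω => m * ((u ω + v ω) / 2) + φ' 0)
    (h := fun ω => φ' (u ω) / 2 + φ' (v ω) / 2)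
    ((convex_cont hφ).comp_aestronglyMeasurable hmid.1)
    (int_aux (hmid.const_mul m) (integrable_const (φ' 0)) fun ω => rfl)
    (int_aux (hpu.div_const 2) (hpv.div_const 2) fun ω => rfl) ?_ ?_
  · refine Filter.Eventually.of_forall fun ω => ?_
    show m * ((u ω + v ω) / 2) + φ' 0 ≤ φ' ((u ω + v ω) / 2)
    have h := hm ((u ω + v ω) / 2)
    rw [sub_zero] at h
    linarith
  · refine Filter.Eventually.of_forall fun ω => ?_
    show φ' ((u ω + v ω) / 2) ≤ φ' (u ω) / 2 + φ' (v ω) / 2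
    have h := hφ.2 (Set.mem_univ (u ω)) (Set.mem_univ (v ω))
      (by norm_num : (0:ℝ) ≤ 1/2) (by norm_num : (0:ℝ) ≤ 1/2) (by norm_num : (1:ℝ)/2 + 1/2 = 1)
    simp only [smul_eq_mul] at h
    have harg : (u ω + v ω) / 2 = 1/2 * u ω + 1/2 * v ω := by ring
    rw [harg]
    linarith

private lemma core_contra {p : ℕ} [IsProbabilityMeasure μ']
    {X : Ω' → EuclideanSpace ℝ (Fin (p + 1))}
    (hXi : ∀ i, Integrable (fun ω => X ω i) μ')
    (hφ : ConvexOn ℝ Set.univ φ')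
    (hφ1 : ∀ b₁ : ℝ, b₁ ≠ 0 → ¬ Integrable (fun ω => φ' (X ω 0 * b₁)) μ')
    (hφrest : ∀ brest : Fin p → ℝ,
      Integrable (fun ω => φ' (∑ i : Fin p, X ω i.succ * brest i)) μ')
    {b₁ : ℝ} (hb : b₁ ≠ 0) (γ : Fin p → ℝ) (c : ℝ)
    (hint : Integrable (fun ω => φ' (X ω 0 * b₁ + (∑ i : Fin p, X ω i.succ * γ i + c))) μ') :
    False := by
  have hVi : Integrable (fun ω => ∑ i : Fin p, X ω i.succ * γ i) μ' :=
    integrable_finset_sum _ fun i _ => (hXi i.succ).mul_const _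
  have hsum2 : ∀ ω, ∑ i : Fin p, X ω i.succ * (-2 * γ i)
      = -2 * ∑ i : Fin p, X ω i.succ * γ i := by
    intro ω
    rw [Finset.mul_sum]
    exact Finset.sum_congr rfl fun i _ => by ring
  have h1 : Integrable (fun ω => φ' (-(∑ i : Fin p, X ω i.succ * γ i) - c)) μ' := by
    have hmid := integrable_phi_mid hφ
      (u := fun ω => ∑ i : Fin p, X ω i.succ * (-2 * γ i)) (v := fun _ => -2 * c)
      (integrable_finset_sum _ fun i _ => (hXi i.succ).mul_const _) (integrable_const _)
      (hφrest _) (integrable_const _)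
    refine hmid.congr (Filter.Eventually.of_forall fun ω => ?_)
    show φ' (((∑ i : Fin p, X ω i.succ * (-2 * γ i)) + -2 * c) / 2)
      = φ' (-(∑ i : Fin p, X ω i.succ * γ i) - c)
    congr 1
    rw [hsum2 ω]
    ring
  have h2 : Integrable (fun ω => φ' (X ω 0 * (b₁ / 2))) μ' := by
    have hui : Integrable (fun ω => X ω 0 * b₁ + (∑ i : Fin p, X ω i.succ * γ i + c)) μ' :=
      int_aux ((hXi 0).mul_const b₁) (int_aux hVi (integrable_const c) fun ω => rfl) fun ω => rfl
    have hvi : Integrable (fun ω => -(∑ i : Fin p, X ω i.succ * γ i) - c) μ' :=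
      int_aux (hVi.const_mul (-1)) (integrable_const (-c)) fun ω => by ring
    have hmid := integrable_phi_mid hφ hui hvi hint h1
    refine hmid.congr (Filter.Eventually.of_forall fun ω => ?_)
    show φ' (((X ω 0 * b₁ + (∑ i : Fin p, X ω i.succ * γ i + c))
      + (-(∑ i : Fin p, X ω i.succ * γ i) - c)) / 2) = φ' (X ω 0 * (b₁ / 2))
    congr 1
    ring
  exact hφ1 (b₁ / 2) (div_ne_zero hb two_ne_zero) h2

private lemma integrable_comp_condexp [IsProbabilityMeasure μ']
    {m : MeasurableSpace Ω'} (hm : m ≤ m0) {Y G : Ω' → ℝ}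
    (hYi : Integrable Y μ') (hGi : Integrable G μ')
    (hGY : μ'[Y|m] =ᵐ[μ'] G)
    (hφ : ConvexOn ℝ Set.univ φ') (hφY : Integrable (fun ω => φ' (Y ω)) μ') :
    Integrable (fun ω => φ' (G ω)) μ' := by
  choose mq hmq using fun q : ℚ => support_line hφ (q : ℝ)
  have hcond : ∀ q : ℚ, ∀ᵐ ω ∂μ',
      φ' (q : ℝ) + mq q * (G ω - (q : ℝ)) ≤ (μ'[fun ω => φ' (Y ω)|m]) ω := by
    intro q
    have hFi : Integrable (mq q • Y) μ' := hYi.smul (mq q)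
    have hCi : Integrable (fun _ : Ω' => φ' (q : ℝ) - mq q * (q : ℝ)) μ' := integrable_const _
    have hkeyq : (mq q • Y) + (fun _ : Ω' => φ' (q : ℝ) - mq q * (q : ℝ))
        ≤ᵐ[μ'] fun ω => φ' (Y ω) := by
      refine Filter.Eventually.of_forall fun ω => ?_
      have h := hmq q (Y ω)
      simp only [Pi.add_apply, Pi.smul_apply, smul_eq_mul]
      linarith
    have hmono := condExp_mono (μ := μ') (m := m) (hFi.add hCi) hφY hkeyq
    have he1 := condExp_add (μ := μ') (m := m) hFi hCi
    have hs := condExp_smul (μ := μ') (m := m) (mq q) Y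
    have hconst := condExp_const (μ := μ') hm (φ' (q : ℝ) - mq q * (q : ℝ))
    filter_upwards [hmono, he1, hs, hGY] with ω h₁ h₂ h₃ h₄
    simp only [Pi.add_apply, Pi.smul_apply, smul_eq_mul] at h₂ h₃
    have hc : (μ'[fun _ : Ω' => φ' (q : ℝ) - mq q * (q : ℝ)|m]) ω
        = φ' (q : ℝ) - mq q * (q : ℝ) := by rw [hconst]
    have heq : (μ'[mq q • Y + (fun _ : Ω' => φ' (q : ℝ) - mq q * (q : ℝ))|m]) ω
        = mq q * G ω + (φ' (q : ℝ) - mq q * (q : ℝ)) := by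
      rw [h₂, h₃, hc, h₄]
    rw [heq] at h₁
    linarith
  have hae : ∀ᵐ ω ∂μ', ∀ q : ℚ,
      φ' (q : ℝ) + mq q * (G ω - (q : ℝ)) ≤ (μ'[fun ω => φ' (Y ω)|m]) ω := (ae_all_iff).2 hcond
  have hup : (fun ω => φ' (G ω)) ≤ᵐ[μ'] μ'[fun ω => φ' (Y ω)|m] :=
    hae.mono fun ω hω => le_of_rat_support hφ mq hmq hω
  obtain ⟨m₀, hm₀⟩ := support_line hφ 0
  have hlow : (fun ω => m₀ * G ω + φ' 0) ≤ᵐ[μ'] fun ω => φ' (G ω) := by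
    refine Filter.Eventually.of_forall fun ω => ?_
    show m₀ * G ω + φ' 0 ≤ φ' (G ω)
    have := hm₀ (G ω)
    rw [sub_zero] at this
    linarith
  exact integrable_sandwich ((convex_cont hφ).comp_aestronglyMeasurable hGi.1)
    (int_aux (hGi.const_mul m₀) (integrable_const (φ' 0)) fun ω => rfl)
    integrable_condExp hlow hup

end AuxLemmas

/-- Under Assumption 1 (with dimension `p + 1`, writing
`X = (X₁, X₋₁)` where `X₁ = X 0` and `X₋₁ = (X 1, ..., X p)`), if `φ` is convex with
`E[φ(Y)] < ∞`, `E[φ(X₁ β₁)] = ∞` for all `β₁ ≠ 0` and `E[φ(X₋₁'β₋₁)] < ∞` for all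
`β₋₁ ∈ ℝ^p`, then the projection of the identified set on the first coordinate is
`{0}`; in particular the first coordinate of `β₀` is `0`. -/
theorem stmt6 (μ : Measure Ω) [IsProbabilityMeasure μ] {p : ℕ}
    (Y : Ω → ℝ) (X : Ω → EuclideanSpace ℝ (Fin (p + 1)))
    (hYm : Measurable Y) (hXm : Measurable X)
    (hY2 : MemLp Y 2 μ) (hX2 : MemLp X 2 μ)
    (hVarY : 0 < variance Y μ) (hVarX : (covMatrix μ X).det ≠ 0)
    (α₀ : ℝ) (β₀ : EuclideanSpace ℝ (Fin (p + 1)))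
    (hmod : μ[Y | MeasurableSpace.comap X inferInstance]
      =ᵐ[μ] fun ω => α₀ + dotp (X ω) β₀)
    (φ : ℝ → ℝ) (hφ : ConvexOn ℝ Set.univ φ)
    (hφY : Integrable (fun ω => φ (Y ω)) μ)
    (hφ1 : ∀ b₁ : ℝ, b₁ ≠ 0 → ¬ Integrable (fun ω => φ (X ω 0 * b₁)) μ)
    (hφrest : ∀ brest : Fin p → ℝ,
      Integrable (fun ω => φ (∑ i : Fin p, X ω i.succ * brest i)) μ) :
    {b : ℝ | ∃ β ∈ Bset μ Y X, β 0 = b} = {0} ∧ β₀ 0 = 0 := by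
  classical
  have hYi : Integrable Y μ := hY2.integrable one_le_two
  have hXii : ∀ i, Integrable (fun ω => X ω i) μ := by
    intro i
    have h := ((EuclideanSpace.proj (𝕜 := ℝ) i).comp_memLp' hX2).integrable one_le_two
    exact h
  -- Part A: every element of the identified set has first coordinate 0
  have partA : ∀ β ∈ Bset μ Y X, β 0 = 0 := by
    intro β hβ
    by_contra hb
    set ψ : ℝ → ℝ := fun x => φ (x + ∫ ω', Y ω' ∂μ) with hψ
    have hψconv : ConvexOn ℝ Set.univ ψ := by
      refine ⟨convex_univ, fun x _ y _ a b ha hb2 hab => ?_⟩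
      have h := hφ.2 (Set.mem_univ (x + ∫ ω', Y ω' ∂μ)) (Set.mem_univ (y + ∫ ω', Y ω' ∂μ))
        ha hb2 hab
      simp only [smul_eq_mul, hψ] at h ⊢
      have harg : a * x + b * y + ∫ ω', Y ω' ∂μ
          = a * (x + ∫ ω', Y ω' ∂μ) + b * (y + ∫ ω', Y ω' ∂μ) := by
        linear_combination (-(∫ ω', Y ω' ∂μ)) * hab
      rw [harg]
      exact h
    have hψY : Integrable (fun ω => ψ (cent μ Y ω)) μ := by
      have heq : (fun ω => ψ (cent μ Y ω)) = fun ω => φ (Y ω) := by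
        funext ω
        simp [hψ, cent]
      rw [heq]
      exact hφY
    obtain ⟨hint, -⟩ := hβ ψ hψconv hψY
    have harg : ∀ ω, dotp (centV μ X ω) β + ∫ ω', Y ω' ∂μ
        = X ω 0 * β 0 + (∑ i : Fin p, X ω i.succ * β i.succ
          + ((∫ ω', Y ω' ∂μ) - ∑ i, (∫ ω', X ω' ∂μ) i * β i)) := by
      intro ω
      simp only [dotp, centV, PiLp.sub_apply, sub_mul]
      rw [Finset.sum_sub_distrib, Fin.sum_univ_succ (f := fun i => X ω i * β i)]
      ring
    have hint' : Integrable (fun ω => φ (X ω 0 * β 0 + (∑ i : Fin p, X ω i.succ * β i.succ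
        + ((∫ ω', Y ω' ∂μ) - ∑ i, (∫ ω', X ω' ∂μ) i * β i)))) μ := by
      refine hint.congr (Filter.Eventually.of_forall fun ω => ?_)
      simp only [hψ]
      rw [harg ω]
    exact core_contra hXii hφ hφ1 hφrest hb _ _ hint'
  -- Part B: 0 belongs to the identified set
  have hzero : (0 : EuclideanSpace ℝ (Fin (p + 1))) ∈ Bset μ Y X := by
    intro ψ hψconv hψY
    have hfun : (fun ω => ψ (dotp (centV μ X ω) (0 : EuclideanSpace ℝ (Fin (p + 1)))))
        = fun _ => ψ 0 := by
      funext ω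
      congr 1
      simp [dotp]
    constructor
    · show Integrable (fun ω => ψ (dotp (centV μ X ω) 0)) μ
      rw [hfun]
      exact integrable_const _
    · show (∫ ω, ψ (dotp (centV μ X ω) 0) ∂μ) ≤ ∫ ω, ψ (cent μ Y ω) ∂μ
      rw [hfun]
      obtain ⟨m₀, hm₀⟩ := support_line hψconv 0
      have hcY : Integrable (cent μ Y) μ :=
        (hYi.sub (integrable_const (∫ ω', Y ω' ∂μ))).congr
          (Filter.Eventually.of_forall fun ω => rfl)
      have hEcY : ∫ ω, cent μ Y ω ∂μ = 0 := by
        have h : ∫ ω, (Y ω - ∫ ω', Y ω' ∂μ) ∂μ = 0 := by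
          rw [integral_sub hYi (integrable_const _), integral_const]
          simp
        simpa [cent] using h
      have hlin : Integrable (fun ω => m₀ * cent μ Y ω + ψ 0) μ :=
        int_aux (hcY.const_mul m₀) (integrable_const (ψ 0)) fun ω => rfl
      have hmono : ∫ ω, (m₀ * cent μ Y ω + ψ 0) ∂μ ≤ ∫ ω, ψ (cent μ Y ω) ∂μ := by
        refine integral_mono hlin hψY fun ω => ?_
        have := hm₀ (cent μ Y ω)
        rw [sub_zero] at this
        linarith
      have hval : ∫ ω, (m₀ * cent μ Y ω + ψ 0) ∂μ = ψ 0 := by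
        rw [integral_add (hcY.const_mul m₀) (integrable_const _), integral_const_mul,
          hEcY, integral_const]
        simp
      calc ∫ _, ψ 0 ∂μ = ψ 0 := by simp
      _ = ∫ ω, (m₀ * cent μ Y ω + ψ 0) ∂μ := hval.symm
      _ ≤ _ := hmono
  -- Part C: the population coefficient has first coordinate 0
  have hβ0 : β₀ 0 = 0 := by
    by_contra hb
    have hsumi : Integrable (fun ω => dotp (X ω) β₀) μ := by
      simp only [dotp]
      exact integrable_finset_sum _ fun i _ => (hXii i).mul_const _
    have hGi : Integrable (fun ω => α₀ + dotp (X ω) β₀) μ :=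
      int_aux (integrable_const α₀) hsumi fun ω => rfl
    have hφG : Integrable (fun ω => φ (α₀ + dotp (X ω) β₀)) μ :=
      integrable_comp_condexp hXm.comap_le hYi hGi hmod hφ hφY
    have hint' : Integrable (fun ω => φ (X ω 0 * β₀ 0
        + (∑ i : Fin p, X ω i.succ * β₀ i.succ + α₀))) μ := by
      refine hφG.congr (Filter.Eventually.of_forall fun ω => ?_)
      congr 1
      simp only [dotp]
      rw [Fin.sum_univ_succ (f := fun i => X ω i * β₀ i)]
      ring
    exact core_contra hXii hφ hφ1 hφrest hb _ _ hint'
  refine ⟨?_, hβ0⟩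
  ext b
  simp only [Set.mem_setOf_eq, Set.mem_singleton_iff]
  constructor
  · rintro ⟨β, hβ, rfl⟩
    exact partA β hβ
  · rintro rfl
    exact ⟨0, hzero, by simp⟩
end
end

section
/- Suppose Assumption 1 holds and set U = Y₀ − X₀'β₀. If there exists a convex function φ : ℝ → ℝ such that E[φ(λU)] < E[φ(λ X₀'β₀)] = ∞ for all λ > 1, then for every c > 0, Y₀ does not dominate (1+c) X₀'β₀ in the convex order, i.e., (1+c)β₀ ∉ B = {β ∈ ℝ^p : Y₀ ⪰cx X₀'β}; consequently β₀ lies on the topological boundary ∂B of B. -/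
open MeasureTheory ProbabilityTheory Filter Set
open Topology

noncomputable section

variable {Ω : Type*} [MeasurableSpace Ω]

section AuxConvex

lemma affine_convexOn (a b : ℝ) : ConvexOn ℝ Set.univ (fun x => a + b * x) := by
  refine ⟨convex_univ, fun x _ y _ s t hs ht hst => ?_⟩
  simp only [smul_eq_mul]
  exact le_of_eq (by linear_combination a * hst.symm)

lemma exists_subtangent {G : ℝ → ℝ} (hG : ConvexOn ℝ Set.univ G) (x₀ : ℝ) :
    ∃ m : ℝ, ∀ x, G x₀ + m * (x - x₀) ≤ G x := by
  set S : Set ℝ := (fun p => (G x₀ - G p) / (x₀ - p)) '' Iio x₀ with hS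
  have hne : S.Nonempty := ⟨_, ⟨x₀ - 1, by simp [sub_lt_self_iff], rfl⟩⟩
  have hbdd : BddAbove S := by
    refine ⟨(G (x₀ + 1) - G x₀) / (x₀ + 1 - x₀), ?_⟩
    rintro s ⟨p, hp, rfl⟩
    have := hG.slope_mono_adjacent (mem_univ p) (mem_univ (x₀ + 1)) hp (by linarith)
    simpa using this
  refine ⟨sSup S, fun x => ?_⟩
  rcases lt_trichotomy x x₀ with hx | hx | hx
  · have h1 : (G x₀ - G x) / (x₀ - x) ≤ sSup S := le_csSup hbdd ⟨x, hx, rfl⟩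
    have h2 : (0:ℝ) < x₀ - x := by linarith
    have h3 : G x₀ - G x ≤ sSup S * (x₀ - x) := by
      rw [div_le_iff₀ h2] at h1; linarith
    nlinarith
  · simp [hx]
  · have h1 : sSup S ≤ (G x - G x₀) / (x - x₀) := by
      refine csSup_le hne ?_
      rintro s ⟨p, hp, rfl⟩
      have := hG.slope_mono_adjacent (mem_univ p) (mem_univ x) hp hx
      exact this
    have h2 : (0:ℝ) < x - x₀ := by linarith
    have h3 : sSup S * (x - x₀) ≤ G x - G x₀ := by
      rw [le_div_iff₀ h2] at h1; linarith
    linarith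

lemma convexOn_le_max {G : ℝ → ℝ} (hG : ConvexOn ℝ Set.univ G) {a b y : ℝ}
    (h1 : a ≤ y) (h2 : y ≤ b) : G y ≤ max (G a) (G b) := by
  rcases eq_or_lt_of_le (h1.trans h2) with hab | hab
  · have : y = a := le_antisymm (hab ▸ h2) h1
    simp [this]
  · have hb2 : (0:ℝ) < b - a := by linarith
    have hco := hG.le_on_segment' (mem_univ a) (mem_univ b)
      (a := (b - y)/(b - a)) (b := (y - a)/(b - a))
      (div_nonneg (by linarith) (by linarith)) (div_nonneg (by linarith) (by linarith))
      (by field_simp; ring)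
    have hyy : ((b - y)/(b - a)) • a + ((y - a)/(b - a)) • b = y := by
      rw [smul_eq_mul, smul_eq_mul, div_mul_eq_mul_div, div_mul_eq_mul_div, ← add_div,
        div_eq_iff hb2.ne']
      ring
    rwa [hyy] at hco

lemma tangent_family {G : ℝ → ℝ} (hG : ConvexOn ℝ Set.univ G) :
    ∃ T : ℝ → ℝ, (∀ t x, G t + T t * (x - t) ≤ G x) ∧
      (∀ x ε : ℝ, 0 < ε → ∃ q : ℚ, G x - ε ≤ G (q:ℝ) + T (q:ℝ) * (x - (q:ℝ))) := by
  choose T hT using fun t => exists_subtangent hG t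
  refine ⟨T, hT, fun x ε hε => ?_⟩
  set Bx := |T x| with hBx
  set K := max (G (x+1)) (G (x+2)) - G x + Bx with hK
  set D := Bx + max K 0 + 1 with hD
  have hD0 : (0:ℝ) < D := by positivity
  set δ := min 1 (ε / D) with hδ
  have hδ0 : (0:ℝ) < δ := lt_min one_pos (by positivity)
  obtain ⟨q, hq1, hq2⟩ := exists_rat_btwn (show x < x + δ by linarith)
  have hqx : (0:ℝ) < (q:ℝ) - x := by linarith
  have hqδ : (q:ℝ) - x ≤ δ := by linarith
  have hq1' : (q:ℝ) - x ≤ 1 := hqδ.trans (min_le_left _ _)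
  have hGq : G x - Bx * ((q:ℝ) - x) ≤ G (q:ℝ) := by
    have := hT x (q:ℝ)
    have habs : -Bx ≤ T x := neg_abs_le _
    nlinarith
  have hBx0 : (0:ℝ) ≤ Bx := abs_nonneg _
  have hGq1 : G x - Bx ≤ G (q:ℝ) := by nlinarith
  have hTq : T (q:ℝ) ≤ K := by
    have h1 : G (q:ℝ) + T (q:ℝ) ≤ G ((q:ℝ) + 1) := by
      have := hT (q:ℝ) ((q:ℝ)+1); simpa using this
    have h2 : G ((q:ℝ)+1) ≤ max (G (x+1)) (G (x+2)) :=
      convexOn_le_max hG (by linarith) (by linarith)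
    have := hGq1
    simp only [hK]
    linarith
  refine ⟨q, ?_⟩
  have hTqb : T (q:ℝ) * ((q:ℝ) - x) ≤ max K 0 * δ := by
    rcases le_or_gt (T (q:ℝ)) 0 with h | h
    · have : T (q:ℝ) * ((q:ℝ) - x) ≤ 0 := mul_nonpos_of_nonpos_of_nonneg h hqx.le
      have : (0:ℝ) ≤ max K 0 * δ := by positivity
      linarith
    · have h1 : T (q:ℝ) * ((q:ℝ) - x) ≤ K * ((q:ℝ) - x) := by nlinarith
      have h2 : K * ((q:ℝ) - x) ≤ max K 0 * ((q:ℝ) - x) := by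
        have := le_max_left K (0:ℝ); nlinarith
      have h3 : max K 0 * ((q:ℝ) - x) ≤ max K 0 * δ := by
        have := le_max_right K (0:ℝ); nlinarith
      linarith
  have hδε : (Bx + max K 0) * δ ≤ ε := by
    have h1 : δ ≤ ε / D := min_le_right _ _
    have h2 : (Bx + max K 0) * δ ≤ (Bx + max K 0) * (ε / D) := by
      have : (0:ℝ) ≤ Bx + max K 0 := by positivity
      nlinarith
    have hE0 : (0:ℝ) ≤ Bx + max K 0 := by
      have := le_max_right K (0:ℝ); linarith [abs_nonneg (T x)]
    have h3 : (Bx + max K 0) * (ε / D) ≤ ε := by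
      have hquot : (Bx + max K 0) / D ≤ 1 := by
        rw [div_le_one hD0]; simp [hD]
      have : (Bx + max K 0) * (ε / D) = ((Bx + max K 0) / D) * ε := by ring
      rw [this]
      nlinarith
    linarith
  have hBxq : Bx * ((q:ℝ) - x) ≤ Bx * δ := by
    have : (0:ℝ) ≤ Bx := abs_nonneg _
    nlinarith
  have : G x - ε ≤ G (q:ℝ) - T (q:ℝ) * ((q:ℝ) - x) := by
    have hmax0 : (0:ℝ) ≤ max K 0 := le_max_right _ _
    nlinarith
  calc G x - ε ≤ G (q:ℝ) - T (q:ℝ) * ((q:ℝ) - x) := this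
    _ = G (q:ℝ) + T (q:ℝ) * (x - (q:ℝ)) := by ring

end AuxConvex

section CoreLemmas

lemma core_int (μ : Measure Ω) [IsProbabilityMeasure μ] {U V : Ω → ℝ}
    (hUm : Measurable U) (hVm : Measurable V)
    (hUi : Integrable U μ) (hVi : Integrable V μ) {c : ℝ} (hc : 0 < c)
    (hord : ∀ G : ℝ → ℝ, ConvexOn ℝ Set.univ G →
      Integrable (fun ω => G (U ω + V ω)) μ →
      ∫ ω, G ((1+c) * V ω) ∂μ ≤ ∫ ω, G (U ω + V ω) ∂μ)
    {h : ℝ → ℝ} (hconv : ConvexOn ℝ Set.univ h) (hnn : ∀ x, 0 ≤ h x)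
    (hint : Integrable (fun ω => h ((1+c)/c * U ω)) μ) :
    Integrable (fun ω => h ((1+c) * V ω)) μ := by
  have hc1 : (0:ℝ) < 1 + c := by linarith
  obtain ⟨T, hT, happrox⟩ := tangent_family hconv
  obtain ⟨e, he⟩ := exists_surjective_nat ℚ
  set ℓ : ℕ → ℝ → ℝ := fun i x => h ((e i : ℚ) : ℝ) + T ((e i : ℚ) : ℝ) * (x - ((e i : ℚ) : ℝ))
    with hℓ
  have hℓle : ∀ i x, ℓ i x ≤ h x := fun i x => hT _ x
  have hℓconv : ∀ i, ConvexOn ℝ Set.univ (ℓ i) := by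
    intro i
    have : (ℓ i) = fun x => (h ((e i : ℚ) : ℝ) - T ((e i : ℚ) : ℝ) * ((e i : ℚ) : ℝ))
        + T ((e i : ℚ) : ℝ) * x := by
      funext x; simp only [hℓ]; ring
    rw [this]; exact affine_convexOn _ _
  have hℓcont : ∀ i, Continuous (ℓ i) := by
    intro i
    simp only [hℓ]
    fun_prop
  set L : ℕ → ℝ → ℝ :=
    fun m => (Finset.range (m+1)).sup' Finset.nonempty_range_add_one (fun i => ℓ i) with hL
  set G : ℕ → ℝ → ℝ := fun m x => (L m x) ⊔ 0 with hG
  have hLapp : ∀ m x, L m x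
      = (Finset.range (m+1)).sup' Finset.nonempty_range_add_one (fun i => ℓ i x) := by
    intro m x; rw [hL]; exact Finset.sup'_apply _ _ _
  have hGconv : ∀ m, ConvexOn ℝ Set.univ (G m) := by
    intro m
    have hLc : ConvexOn ℝ Set.univ (L m) := by
      rw [hL]
      exact Finset.sup'_induction (p := fun f : ℝ → ℝ => ConvexOn ℝ Set.univ f) _ _
        (fun f hf g hg => hf.sup hg) (fun i _ => hℓconv i)
    exact hLc.sup (convexOn_const 0 convex_univ)
  have hGcont : ∀ m, Continuous (G m) := by
    intro m
    have hLcont : Continuous (L m) := by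
      rw [hL]
      exact Finset.sup'_induction (p := fun f : ℝ → ℝ => Continuous f) _ _
        (fun f hf g hg => hf.max hg) (fun i _ => hℓcont i)
    exact hLcont.max continuous_const
  have hGbd : ∀ m, ∃ a b : ℝ, ∀ x, |G m x| ≤ a + b * |x| := by
    intro m
    have habs : ∀ u v : ℝ, |u ⊔ v| ≤ |u| + |v| := by
      intro u v
      rcases max_cases u v with ⟨hh, _⟩ | ⟨hh, _⟩ <;> rw [show u ⊔ v = max u v from rfl, hh]
      · nlinarith [abs_nonneg v]
      · nlinarith [abs_nonneg u]
    have hLbd : ∃ a b : ℝ, ∀ x, |L m x| ≤ a + b * |x| := by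
      rw [hL]
      refine Finset.sup'_induction
        (p := fun f : ℝ → ℝ => ∃ a b : ℝ, ∀ x, |f x| ≤ a + b * |x|) _ _ ?_ ?_
      · rintro f ⟨a₁, b₁, hf⟩ g ⟨a₂, b₂, hg⟩
        refine ⟨a₁ + a₂ + (|f 0| + |g 0|), b₁ + b₂, fun x => ?_⟩
        have := habs (f x) (g x)
        have h1 := hf x; have h2 := hg x
        have : |(f ⊔ g) x| ≤ |f x| + |g x| := by
          rw [Pi.sup_apply]; exact habs _ _
        nlinarith [abs_nonneg (f 0), abs_nonneg (g 0)]
      · intro i _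
        refine ⟨|h ((e i : ℚ) : ℝ)| + |T ((e i : ℚ) : ℝ)| * |((e i : ℚ) : ℝ)|,
          |T ((e i : ℚ) : ℝ)|, fun x => ?_⟩
        simp only [hℓ]
        calc |h ((e i : ℚ) : ℝ) + T ((e i : ℚ) : ℝ) * (x - ((e i : ℚ) : ℝ))|
            ≤ |h ((e i : ℚ) : ℝ)| + |T ((e i : ℚ) : ℝ) * (x - ((e i : ℚ) : ℝ))| := abs_add_le _ _
          _ ≤ _ := by
              rw [abs_mul]
              have : |x - ((e i : ℚ) : ℝ)| ≤ |x| + |((e i : ℚ) : ℝ)| := abs_sub _ _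
              nlinarith [abs_nonneg (T ((e i : ℚ) : ℝ))]
    obtain ⟨a, b, hab⟩ := hLbd
    refine ⟨a + 0, b, fun x => ?_⟩
    have : |G m x| ≤ |L m x| + |(0:ℝ)| := by rw [hG]; exact habs _ _
    simp only [abs_zero, add_zero] at this
    have := hab x
    simp only [add_zero]
    linarith
  have hGint : ∀ m (f : Ω → ℝ), Measurable f → Integrable f μ →
      Integrable (fun ω => G m (f ω)) μ := by
    intro m f hfm hfi
    obtain ⟨a, b, hab⟩ := hGbd m
    refine Integrable.mono' ((hfi.abs.const_mul b).add (integrable_const a)) ?_ ?_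
    · exact ((hGcont m).measurable.comp hfm).aestronglyMeasurable
    · filter_upwards with ω
      have := hab (f ω)
      simp only [Pi.add_apply]
      rw [Real.norm_eq_abs]
      linarith
  have hGle : ∀ m x, G m x ≤ h x := by
    intro m x
    rw [hG]
    simp only [sup_le_iff]
    refine ⟨?_, hnn x⟩
    rw [hLapp]
    exact Finset.sup'_le _ _ (fun i _ => hℓle i x)
  have hGnn : ∀ m x, 0 ≤ G m x := fun m x => le_sup_right
  have hGge : ∀ m i, i < m + 1 → ∀ x, ℓ i x ≤ G m x := by
    intro m i hi x
    have : ℓ i x ≤ L m x := by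
      rw [hLapp]
      exact Finset.le_sup' (f := fun j => ℓ j x) (Finset.mem_range.mpr hi)
    exact this.trans le_sup_left
  have htend : ∀ x, Tendsto (fun m => G m x) atTop (𝓝 (h x)) := by
    intro x
    rw [Metric.tendsto_atTop]
    intro ε hε
    obtain ⟨q, hq⟩ := happrox x (ε/2) (by linarith)
    obtain ⟨i, hi⟩ := he q
    refine ⟨i, fun m hm => ?_⟩
    have h1 : ℓ i x ≤ G m x := hGge m i (by omega) x
    have h2 : h x - ε/2 ≤ ℓ i x := by
      simp only [hℓ, hi]
      exact hq
    have h3 : G m x ≤ h x := hGle m x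
    have h5 : h x - ε/2 ≤ G m x := h2.trans h1
    have h6 : h x - G m x ≤ ε/2 := by
      have := sub_le_sub_left h5 (h x)
      rwa [sub_sub_cancel] at this
    rw [Real.dist_eq, abs_of_nonpos (sub_nonpos.mpr h3)]
    have h7 : -(G m x - h x) = h x - G m x := neg_sub _ _
    rw [h7]
    exact lt_of_le_of_lt h6 (half_lt_self hε)
  set M : ℝ := ∫ ω, h ((1+c)/c * U ω) ∂μ with hM
  have hchain : ∀ m, ∫ ω, G m ((1+c) * V ω) ∂μ ≤ M := by
    intro m
    have I1 : Integrable (fun ω => G m (U ω + V ω)) μ :=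
      hGint m _ (hUm.add hVm) (hUi.add hVi)
    have I2 : Integrable (fun ω => G m ((1+c) * V ω)) μ :=
      hGint m _ (hVm.const_mul _) (hVi.const_mul _)
    have I3 : Integrable (fun ω => G m ((1+c)/c * U ω)) μ :=
      hGint m _ (hUm.const_mul _) (hUi.const_mul _)
    have hkey : ∀ ω, G m (U ω + V ω)
        ≤ (c/(1+c)) * G m ((1+c)/c * U ω) + (1/(1+c)) * G m ((1+c) * V ω) := by
      intro ω
      have harg : (c/(1+c)) • ((1+c)/c * U ω) + (1/(1+c)) • ((1+c) * V ω) = U ω + V ω := by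
        simp only [smul_eq_mul]
        field_simp
      have := (hGconv m).2 (mem_univ ((1+c)/c * U ω)) (mem_univ ((1+c) * V ω))
        (show (0:ℝ) ≤ c/(1+c) by positivity) (show (0:ℝ) ≤ 1/(1+c) by positivity)
        (show c/(1+c) + 1/(1+c) = 1 by field_simp; ring)
      rw [harg] at this
      simpa [smul_eq_mul] using this
    have hmono : ∫ ω, G m (U ω + V ω) ∂μ
        ≤ (c/(1+c)) * ∫ ω, G m ((1+c)/c * U ω) ∂μ
          + (1/(1+c)) * ∫ ω, G m ((1+c) * V ω) ∂μ := by
      have := integral_mono I1 ((I3.const_mul _).add (I2.const_mul _)) hkey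
      simp only [Pi.add_apply] at this
      rwa [integral_add (I3.const_mul _) (I2.const_mul _), integral_const_mul,
        integral_const_mul] at this
    have hordm := hord (G m) (hGconv m) I1
    have hUB : ∫ ω, G m ((1+c)/c * U ω) ∂μ ≤ M := by
      rw [hM]
      exact integral_mono I3 hint (fun ω => hGle m _)
    set A := ∫ ω, G m ((1+c) * V ω) ∂μ
    set B := ∫ ω, G m ((1+c)/c * U ω) ∂μ
    have hAB : A ≤ (c/(1+c)) * B + (1/(1+c)) * A := le_trans hordm hmono
    have : A ≤ B := by
      have h1 : (0:ℝ) < c/(1+c) := by positivity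
      have e1 : (c/(1+c)) * A = A - (1/(1+c)) * A := by
        field_simp
        ring
      have h2 : (c/(1+c)) * A ≤ (c/(1+c)) * B := by
        rw [e1]; linarith
      exact le_of_mul_le_mul_left h2 h1
    linarith
  have hWm : Measurable (fun ω => (1+c) * V ω) := hVm.const_mul _
  have hlin : ∀ m, ∫⁻ ω, ENNReal.ofReal (G m ((1+c) * V ω)) ∂μ ≤ ENNReal.ofReal M := by
    intro m
    have I2 : Integrable (fun ω => G m ((1+c) * V ω)) μ :=
      hGint m _ (hVm.const_mul _) (hVi.const_mul _)
    rw [← ofReal_integral_eq_lintegral_ofReal I2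
      (Filter.Eventually.of_forall (fun ω => hGnn m _))]
    exact ENNReal.ofReal_le_ofReal (hchain m)
  have hptw : ∀ ω, Tendsto (fun m => ENNReal.ofReal (G m ((1+c) * V ω))) atTop
      (𝓝 (ENNReal.ofReal (h ((1+c) * V ω)))) :=
    fun ω => (ENNReal.continuous_ofReal.tendsto _).comp (htend _)
  have hlfin : ∫⁻ ω, ENNReal.ofReal (h ((1+c) * V ω)) ∂μ ≤ ENNReal.ofReal M := by
    have heq : ∀ ω, ENNReal.ofReal (h ((1+c) * V ω))
        = liminf (fun m => ENNReal.ofReal (G m ((1+c) * V ω))) atTop :=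
      fun ω => ((hptw ω).liminf_eq).symm
    calc ∫⁻ ω, ENNReal.ofReal (h ((1+c) * V ω)) ∂μ
        = ∫⁻ ω, liminf (fun m => ENNReal.ofReal (G m ((1+c) * V ω))) atTop ∂μ := by
          exact lintegral_congr (fun ω => heq ω)
      _ ≤ liminf (fun m => ∫⁻ ω, ENNReal.ofReal (G m ((1+c) * V ω)) ∂μ) atTop := by
          exact lintegral_liminf_le (fun m =>
            ENNReal.measurable_ofReal.comp ((hGcont m).measurable.comp hWm))
      _ ≤ liminf (fun _ : ℕ => ENNReal.ofReal M) atTop :=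
          Filter.liminf_le_liminf (Filter.Eventually.of_forall hlin)
      _ = ENNReal.ofReal M := by simp [Filter.liminf_const]
  refine ⟨?_, ?_⟩
  · refine aestronglyMeasurable_of_tendsto_ae atTop
      (fun m => ((hGcont m).measurable.comp hWm).aestronglyMeasurable) ?_
    exact Filter.Eventually.of_forall (fun ω => htend _)
  · rw [hasFiniteIntegral_iff_ofReal (Filter.Eventually.of_forall (fun ω => hnn _))]
    exact lt_of_le_of_lt hlfin ENNReal.ofReal_lt_top

end CoreLemmas

section CJ

lemma condJensen {Ω : Type*} {mΩ : MeasurableSpace Ω} (μ : Measure Ω) [IsProbabilityMeasure μ]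
    {Z V : Ω → ℝ}
    (hZi : Integrable Z μ) (hVm : Measurable V) {m' : MeasurableSpace Ω} (hle : m' ≤ mΩ)
    (hVcond : V =ᵐ[μ] μ[Z | m'])
    {G : ℝ → ℝ} (hGconv : ConvexOn ℝ Set.univ G)
    (hGZ : Integrable (fun ω => G (Z ω)) μ) :
    Integrable (fun ω => G (V ω)) μ ∧ ∫ ω, G (V ω) ∂μ ≤ ∫ ω, G (Z ω) ∂μ := by
  have hGcont : Continuous G := by
    have := hGconv.continuousOn isOpen_univ
    rwa [continuousOn_univ] at this
  obtain ⟨T, hT, happrox⟩ := tangent_family hGconv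
  set a : ℚ → ℝ := fun q => G (q:ℝ) - T (q:ℝ) * (q:ℝ) with ha
  set b : ℚ → ℝ := fun q => T (q:ℝ) with hb
  have hab : ∀ (q : ℚ) (x : ℝ), a q + b q * x = G (q:ℝ) + T (q:ℝ) * (x - (q:ℝ)) := by
    intro q x; simp only [ha, hb]; ring
  have hminor : ∀ (q : ℚ) (x : ℝ), a q + b q * x ≤ G x := by
    intro q x; rw [hab]; exact hT _ _
  have hint : ∀ q : ℚ, Integrable (fun ω => a q + b q * Z ω) μ := by
    intro q
    exact (integrable_const (a q)).add (hZi.const_mul (b q))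
  have hcond_aff : ∀ q : ℚ,
      μ[(fun ω => a q + b q * Z ω) | m'] =ᵐ[μ] fun ω => a q + b q * (μ[Z | m']) ω := by
    intro q
    have h1 := condExp_add (m := m') (μ := μ) (integrable_const (a q)) (hZi.const_mul (b q))
    have h2 : μ[(fun _ : Ω => a q) | m'] =ᵐ[μ] fun _ => a q :=
      Filter.EventuallyEq.of_eq (condExp_const (μ := μ) hle (a q))
    have h3 : μ[(fun ω => b q * Z ω) | m'] =ᵐ[μ] fun ω => b q * (μ[Z | m']) ω := by
      have := condExp_smul (μ := μ) (m := m') (b q) Z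
      exact this
    have h4 : (fun ω => a q + b q * Z ω) = (fun _ : Ω => a q) + fun ω => b q * Z ω := rfl
    rw [h4]
    refine h1.trans ?_
    filter_upwards [h2, h3] with ω e2 e3
    simp only [Pi.add_apply, e2, e3]
  have hmonoq : ∀ q : ℚ,
      μ[(fun ω => a q + b q * Z ω) | m'] ≤ᵐ[μ] μ[(fun ω => G (Z ω)) | m'] := by
    intro q
    exact condExp_mono (hint q) hGZ (Filter.Eventually.of_forall (fun ω => hminor q (Z ω)))
  have hall : ∀ᵐ ω ∂μ, ∀ q : ℚ, a q + b q * V ω ≤ (μ[(fun ω => G (Z ω)) | m']) ω := by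
    rw [ae_all_iff]
    intro q
    filter_upwards [hVcond, (hcond_aff q).symm.le.trans (hmonoq q)] with ω e1 e2
    · rw [e1]
      exact e2
  have hkey : ∀ᵐ ω ∂μ, G (V ω) ≤ (μ[(fun ω => G (Z ω)) | m']) ω := by
    filter_upwards [hall] with ω hω
    refine le_of_forall_sub_le (fun ε hε => ?_)
    obtain ⟨q, hq⟩ := happrox (V ω) ε hε
    rw [← hab] at hq
    exact hq.trans (hω q)
  have hGVmeas : Measurable[mΩ] (fun ω => G (V ω)) := hGcont.measurable.comp hVm
  have hGVm := hGVmeas.aestronglyMeasurable (μ := μ)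
  have hVi : Integrable V μ := integrable_condExp.congr hVcond.symm
  have haff0 : Integrable (fun ω => a 0 + b 0 * V ω) μ :=
    (integrable_const (a 0)).add (hVi.const_mul (b 0))
  have hGVi : Integrable (fun ω => G (V ω)) μ := by
    refine Integrable.mono'
      ((integrable_condExp (f := fun ω => G (Z ω)) (m := m')).abs.add haff0.abs) hGVm ?_
    filter_upwards [hkey] with ω h1
    have h2 : a 0 + b 0 * V ω ≤ G (V ω) := hminor 0 (V ω)
    have h3 := le_abs_self ((μ[(fun ω => G (Z ω)) | m']) ω)
    have h4 := neg_abs_le (a 0 + b 0 * V ω)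
    rw [Real.norm_eq_abs, Pi.add_apply]
    rw [abs_le]
    constructor
    · have := abs_nonneg ((μ[(fun ω => G (Z ω)) | m']) ω)
      linarith
    · have := abs_nonneg (a 0 + b 0 * V ω)
      linarith
  refine ⟨hGVi, ?_⟩
  calc ∫ ω, G (V ω) ∂μ ≤ ∫ ω, (μ[(fun ω => G (Z ω)) | m']) ω ∂μ :=
        integral_mono_ae hGVi integrable_condExp hkey
    _ = ∫ ω, G (Z ω) ∂μ := integral_condExp hle

end CJ

/-- Under Assumption 1 with `U = Y₀ - X₀'β₀`, if there is a convex `φ`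
with `E[φ(λU)] < E[φ(λ X₀'β₀)] = ∞` for all `λ > 1`, then `(1+c)β₀ ∉ B` for every
`c > 0`; consequently `β₀` lies on the boundary of `B`. -/
theorem stmt8 (μ : Measure Ω) [IsProbabilityMeasure μ] {p : ℕ}
    (Y : Ω → ℝ) (X : Ω → EuclideanSpace ℝ (Fin p))
    (hYm : Measurable Y) (hXm : Measurable X)
    (hY2 : MemLp Y 2 μ) (hX2 : MemLp X 2 μ)
    (hVarY : 0 < variance Y μ) (hVarX : (covMatrix μ X).det ≠ 0)
    (α₀ : ℝ) (β₀ : EuclideanSpace ℝ (Fin p))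
    (hmod : μ[Y | MeasurableSpace.comap X inferInstance]
      =ᵐ[μ] fun ω => α₀ + dotp (X ω) β₀)
    (hφ : ∃ φ : ℝ → ℝ, ConvexOn ℝ Set.univ φ ∧ ∀ l : ℝ, 1 < l →
      Integrable (fun ω => φ (l * (cent μ Y ω - dotp (centV μ X ω) β₀))) μ ∧
      ¬ Integrable (fun ω => φ (l * dotp (centV μ X ω) β₀)) μ) :
    (∀ c : ℝ, 0 < c → ((1 + c) • β₀) ∉ Bset μ Y X) ∧ β₀ ∈ frontier (Bset μ Y X) := by
  obtain ⟨φ, hφconv, hφprop⟩ := hφ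
  -- basic integrability and measurability facts
  have hYint : Integrable Y μ := hY2.integrable one_le_two
  set Z : Ω → ℝ := cent μ Y with hZdef
  have hZm : Measurable Z := hYm.sub measurable_const
  have hZi : Integrable Z μ := hYint.sub (integrable_const _)
  set EX : EuclideanSpace ℝ (Fin p) := ∫ ω, X ω ∂μ with hEX
  have hXint : Integrable X μ := hX2.integrable one_le_two
  have hXim : ∀ i, Measurable (fun ω => X ω i) := by
    intro i
    exact (EuclideanSpace.proj i : EuclideanSpace ℝ (Fin p) →L[ℝ] ℝ).continuous.measurable.comp hXm
  have hXii : ∀ i, Integrable (fun ω => X ω i) μ := by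
    intro i
    have := (EuclideanSpace.proj i : EuclideanSpace ℝ (Fin p) →L[ℝ] ℝ).integrable_comp hXint
    simpa using this
  have hEXi : ∀ i, EX i = ∫ ω, X ω i ∂μ := by
    intro i
    have := (EuclideanSpace.proj i : EuclideanSpace ℝ (Fin p) →L[ℝ] ℝ).integral_comp_comm hXint
    rw [hEX]
    simpa using this.symm
  set V : Ω → ℝ := fun ω => dotp (centV μ X ω) β₀ with hVdef
  have hVexp : ∀ ω, V ω = ∑ i, (X ω i - EX i) * β₀ i := by
    intro ω
    simp only [hVdef, dotp, centV, hEX]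
    refine Finset.sum_congr rfl (fun i _ => ?_)
    congr 1
  have hVfun : V = fun ω => ∑ i, (X ω i - EX i) * β₀ i := funext hVexp
  have hVm : Measurable V := by
    rw [hVfun]
    exact Finset.measurable_sum _ (fun i _ => (((hXim i).sub measurable_const).mul_const _))
  have hVi : Integrable V μ := by
    rw [hVfun]
    exact integrable_finset_sum _ (fun i _ => (((hXii i).sub (integrable_const _)).mul_const _))
  set U : Ω → ℝ := fun ω => Z ω - V ω with hUdef
  have hUm : Measurable U := hZm.sub hVm
  have hUi : Integrable U μ := hZi.sub hVi
  -- Part 1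
  have part1 : ∀ c : ℝ, 0 < c → ((1 + c) • β₀) ∉ Bset μ Y X := by
    intro c hc hmem
    have hc1 : (0:ℝ) < 1 + c := by linarith
    have hWeq : (fun ω => dotp (centV μ X ω) ((1 + c) • β₀)) = fun ω => (1+c) * V ω := by
      funext ω
      simp only [hVdef, dotp, Finset.mul_sum]
      refine Finset.sum_congr rfl (fun i _ => ?_)
      rw [PiLp.smul_apply, smul_eq_mul]
      ring
    obtain ⟨m₀, hm₀⟩ := exists_subtangent hφconv 0
    set h : ℝ → ℝ := fun x => φ x - φ 0 - m₀ * x with hhdef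
    have hnn : ∀ x, 0 ≤ h x := by
      intro x
      have h1 := hm₀ x
      simp only [hhdef]
      nlinarith
    have hconv : ConvexOn ℝ Set.univ h := by
      have h1 : h = (fun x => (- φ 0) + (- m₀) * x) + φ := by
        funext x; simp only [hhdef, Pi.add_apply]; ring
      rw [h1]
      exact (affine_convexOn _ _).add hφconv
    have hlam : (1:ℝ) < (1+c)/c := (one_lt_div hc).mpr (by linarith)
    have hintφ : Integrable (fun ω => φ ((1+c)/c * U ω)) μ := (hφprop _ hlam).1
    have hinth : Integrable (fun ω => h ((1+c)/c * U ω)) μ := by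
      have hadd := hintφ.add ((integrable_const (-(φ 0))).add
        (((hUi.const_mul ((1+c)/c)).const_mul (-m₀))))
      refine hadd.congr (Filter.Eventually.of_forall (fun ω => ?_))
      simp only [hhdef, Pi.add_apply]
      ring
    have hord : ∀ G : ℝ → ℝ, ConvexOn ℝ Set.univ G →
        Integrable (fun ω => G (U ω + V ω)) μ →
        ∫ ω, G ((1+c) * V ω) ∂μ ≤ ∫ ω, G (U ω + V ω) ∂μ := by
      intro G hGc hGi
      have hUVpt : ∀ ω, U ω + V ω = cent μ Y ω := by
        intro ω
        simp only [hUdef, hZdef]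
        ring
      have hGZ : Integrable (fun ω => G (cent μ Y ω)) μ :=
        hGi.congr (Filter.Eventually.of_forall (fun ω => congrArg G (hUVpt ω)))
      obtain ⟨hint2, hle2⟩ := hmem G hGc hGZ
      have e2 : (fun ω => G ((1+c) * V ω))
          = fun ω => G (dotp (centV μ X ω) ((1+c) • β₀)) :=
        funext (fun ω => (congrArg G (congrFun hWeq ω)).symm)
      have e3 : (fun ω => G (U ω + V ω)) = fun ω => G (cent μ Y ω) :=
        funext (fun ω => congrArg G (hUVpt ω))
      rw [e2, e3]
      exact hle2
    have hres : Integrable (fun ω => h ((1+c) * V ω)) μ :=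
      core_int μ hUm hVm hUi hVi hc hord hconv hnn hinth
    have hφV : Integrable (fun ω => φ ((1+c) * V ω)) μ := by
      have hadd := hres.add ((integrable_const (φ 0)).add
        ((hVi.const_mul (1+c)).const_mul m₀))
      refine hadd.congr (Filter.Eventually.of_forall (fun ω => ?_))
      simp only [hhdef, Pi.add_apply]
      ring
    exact (hφprop (1+c) (by linarith)).2 hφV
  -- Part 2 : β₀ ∈ Bset via conditional Jensen
  have hle𝒢 : MeasurableSpace.comap X inferInstance ≤ ‹MeasurableSpace Ω› :=
    measurable_iff_comap_le.mp hXm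
  have hdotXi : Integrable (fun ω => dotp (X ω) β₀) μ := by
    have e : (fun ω => dotp (X ω) β₀) = fun ω => ∑ i, X ω i * β₀ i := rfl
    rw [e]
    exact integrable_finset_sum _ (fun i _ => (hXii i).mul_const _)
  have hEY : ∫ ω, Y ω ∂μ = α₀ + dotp EX β₀ := by
    have h1 : ∫ ω, Y ω ∂μ
        = ∫ ω, (μ[Y | MeasurableSpace.comap X inferInstance]) ω ∂μ :=
      (integral_condExp hle𝒢).symm
    have h2 : ∫ ω, dotp (X ω) β₀ ∂μ = dotp EX β₀ := by
      have e : (fun ω => dotp (X ω) β₀) = fun ω => ∑ i, X ω i * β₀ i := rfl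
      rw [e, integral_finset_sum _ (fun i _ => (hXii i).mul_const _)]
      rw [dotp]
      refine Finset.sum_congr rfl (fun i _ => ?_)
      rw [integral_mul_const, hEXi i]
    rw [h1, integral_congr_ae hmod,
      integral_add (integrable_const α₀) hdotXi, integral_const, h2]
    simp
  have hcondZ : μ[Z | MeasurableSpace.comap X inferInstance]
      =ᵐ[μ] fun ω => (μ[Y | MeasurableSpace.comap X inferInstance]) ω - ∫ ω', Y ω' ∂μ := by
    have hZfun : Z = Y - (fun _ : Ω => ∫ ω', Y ω' ∂μ) := rfl
    rw [hZfun]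
    have h1 := condExp_sub (μ := μ) (m := MeasurableSpace.comap X inferInstance)
      hYint (integrable_const (∫ ω', Y ω' ∂μ))
    refine h1.trans ?_
    have h2 : μ[(fun _ : Ω => ∫ ω', Y ω' ∂μ) | MeasurableSpace.comap X inferInstance]
        = fun _ => ∫ ω', Y ω' ∂μ := condExp_const hle𝒢 _
    filter_upwards with ω
    rw [Pi.sub_apply, h2]
  have hVcond : V =ᵐ[μ] μ[Z | MeasurableSpace.comap X inferInstance] := by
    refine Filter.EventuallyEq.symm (hcondZ.trans ?_)
    filter_upwards [hmod] with ω hω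
    rw [hω, hEY, hVexp ω]
    simp only [dotp, sub_mul, Finset.sum_sub_distrib]
    ring
  have hβmem : β₀ ∈ Bset μ Y X := by
    intro G hGc hGZ
    exact condJensen μ hZi hVm hle𝒢 hVcond hGc hGZ
  refine ⟨part1, ?_⟩
  refine ⟨subset_closure hβmem, ?_⟩
  intro hin
  have hβ0 : β₀ ≠ 0 := by
    intro h0
    refine part1 1 one_pos ?_
    have : ((1:ℝ) + 1) • β₀ = β₀ := by rw [h0, smul_zero]
    rwa [this]
  obtain ⟨ε, hε, hball⟩ := Metric.mem_nhds_iff.mp (mem_interior_iff_mem_nhds.mp hin)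
  have hnorm : (0:ℝ) < ‖β₀‖ := norm_pos_iff.mpr hβ0
  have hc : 0 < ε / (2 * ‖β₀‖) := by positivity
  have hmem2 : ((1 + ε / (2 * ‖β₀‖)) • β₀) ∈ Metric.ball β₀ ε := by
    rw [Metric.mem_ball, dist_eq_norm]
    have e1 : (1 + ε / (2 * ‖β₀‖)) • β₀ - β₀ = (ε / (2 * ‖β₀‖)) • β₀ := by
      rw [add_smul, one_smul]; abel
    rw [e1, norm_smul, Real.norm_eq_abs, abs_of_pos hc]
    have e2 : ε / (2 * ‖β₀‖) * ‖β₀‖ = ε / 2 := by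
      have hne : ‖β₀‖ ≠ 0 := hnorm.ne'
      field_simp
    rw [e2]
    linarith
  exact part1 _ hc (hball hmem2)
end
end
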